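/- For all P, Q ∈ pCSP, if P ⊑_FS Q then P ⊑_pmust Q. -/

import Mathlib

open Classical

noncomputable section

namespace PaperPCSP

/-! ### Finitely supported distributions as weight functions -/

/-- Weight functions on `X`; probability distributions are those satisfying `IsDist`. -/
abbrev Wt (X : Type) := X → ℝ

/-- The support of a weight function. -/
def dsupp {X : Type} (Δ : Wt X) : Set X := Function.support Δ

/-- `Δ` is a finitely supported probability distribution. -/
def IsDist {X : Type} (Δ : Wt X) : Prop :=
  (∀ x, 0 ≤ Δ x) ∧ (dsupp Δ).Finite ∧ ∑ᶠ x, Δ x = 1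

/-- The point distribution at `x`. -/
def dirac {X : Type} (x : X) : Wt X := fun y => if y = x then 1 else 0

/-- Pushforward of a weight function along a map. -/
def dmap {X Y : Type} (g : X → Y) (Δ : Wt X) : Wt Y :=
  fun y => ∑ᶠ x ∈ {x | g x = y}, Δ x

/-- Expected value of `f` under `Δ`. -/
def dexp {X : Type} (Δ : Wt X) (f : X → ℝ) : ℝ := ∑ᶠ x, Δ x * f x

/-! ### Syntax of pCSP -/

mutual
/-- Process terms of pCSP (over prefix alphabet `A`). -/
inductive PCSP (A : Type) : Type where
  | st : SCSP A → PCSP A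
  | pch : ℝ → PCSP A → PCSP A → PCSP A
/-- State-based process terms of pCSP. -/
inductive SCSP (A : Type) : Type where
  | nil : SCSP A
  | pre : A → PCSP A → SCSP A
  | ich : PCSP A → PCSP A → SCSP A
  | ech : SCSP A → SCSP A → SCSP A
  | par : Set A → SCSP A → SCSP A → SCSP A
end

mutual
/-- Well-formedness: all probabilistic choices have `p ∈ (0,1)`.  `pCSP` proper
consists of the well-formed terms. -/
inductive PWF : {A : Type} → PCSP A → Prop where
  | st {A} {s : SCSP A} : SWF s → PWF (.st s)
  | pch {A} {p : ℝ} {P Q : PCSP A} : 0 < p → p < 1 → PWF P → PWF Q → PWF (.pch p P Q)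
inductive SWF : {A : Type} → SCSP A → Prop where
  | nil {A} : SWF (SCSP.nil (A := A))
  | pre {A} {a : A} {P} : PWF P → SWF (.pre a P)
  | ich {A} {P Q : PCSP A} : PWF P → PWF Q → SWF (.ich P Q)
  | ech {A} {s t : SCSP A} : SWF s → SWF t → SWF (.ech s t)
  | par {A} {B : Set A} {s t : SCSP A} : SWF s → SWF t → SWF (.par B s t)
end

/-- Interpretation of process terms as distributions over state-based terms. -/
def PCSP.interp {A : Type} : PCSP A → Wt (SCSP A)
  | .st s => dirac s
  | .pch p P Q => fun t => p * P.interp t + (1 - p) * Q.interp t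

/-! ### Operational semantics -/

/-- The probabilistic labelled transition relation; `none` is the internal action τ. -/
inductive Step {A : Type} : SCSP A → Option A → Wt (SCSP A) → Prop where
  | pre (a : A) (P : PCSP A) : Step (.pre a P) (some a) P.interp
  | ichL (P Q : PCSP A) : Step (.ich P Q) none P.interp
  | ichR (P Q : PCSP A) : Step (.ich P Q) none Q.interp
  | echL {s₁ s₂ : SCSP A} {a : A} {Δ} :
      Step s₁ (some a) Δ → Step (.ech s₁ s₂) (some a) Δ
  | echR {s₁ s₂ : SCSP A} {a : A} {Δ} :
      Step s₂ (some a) Δ → Step (.ech s₁ s₂) (some a) Δ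
  | echTL {s₁ s₂ : SCSP A} {Δ} :
      Step s₁ none Δ → Step (.ech s₁ s₂) none (dmap (fun t => .ech t s₂) Δ)
  | echTR {s₁ s₂ : SCSP A} {Δ} :
      Step s₂ none Δ → Step (.ech s₁ s₂) none (dmap (fun t => .ech s₁ t) Δ)
  | parL {B : Set A} {s₁ s₂ : SCSP A} {α : Option A} {Δ} :
      Step s₁ α Δ → (∀ a, α = some a → a ∉ B) →
      Step (.par B s₁ s₂) α (dmap (fun t => .par B t s₂) Δ)
  | parR {B : Set A} {s₁ s₂ : SCSP A} {α : Option A} {Δ} :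
      Step s₂ α Δ → (∀ a, α = some a → a ∉ B) →
      Step (.par B s₁ s₂) α (dmap (fun t => .par B s₁ t) Δ)
  | parS {B : Set A} {s₁ s₂ : SCSP A} {a : A} {Δ₁ Δ₂} :
      a ∈ B → Step s₁ (some a) Δ₁ → Step s₂ (some a) Δ₂ →
      Step (.par B s₁ s₂) none
        (dmap (fun q : SCSP A × SCSP A => .par B q.1 q.2) (fun q => Δ₁ q.1 * Δ₂ q.2))

/-! ### Lifting relations to distributions, weak transitions -/

/-- Lifting of a state-vs-distribution relation to distributions. -/
def Lift {A : Type} (R : SCSP A → Wt (SCSP A) → Prop) (Δ Θ : Wt (SCSP A)) : Prop :=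
  ∃ (n : ℕ) (p : Fin n → ℝ) (s : Fin n → SCSP A) (Φ : Fin n → Wt (SCSP A)),
    (∀ i, 0 ≤ p i) ∧ (∑ i, p i = 1) ∧
    (Δ = fun t => ∑ i, p i * dirac (s i) t) ∧
    (∀ i, R (s i) (Φ i)) ∧
    (Θ = fun t => ∑ i, p i * Φ i t)

/-- The transition relation lifted to distributions. -/
def StepD {A : Type} (α : Option A) : Wt (SCSP A) → Wt (SCSP A) → Prop :=
  Lift (fun s Δ => Step s α Δ)

/-- `s --τ̂--> Δ` : a τ-step or staying put. -/
def stepTauHat {A : Type} (s : SCSP A) (Δ : Wt (SCSP A)) : Prop :=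
  Step s none Δ ∨ Δ = dirac s

/-- `==τ̂==>` : reflexive-transitive closure of the lifted `--τ̂-->`. -/
def TauStar {A : Type} : Wt (SCSP A) → Wt (SCSP A) → Prop :=
  Relation.ReflTransGen (Lift stepTauHat)

/-- `Δ ==â==> Θ` for a visible action `a`. -/
def WeakA {A : Type} (a : A) (Δ Θ : Wt (SCSP A)) : Prop :=
  ∃ Δ₁ Δ₂, TauStar Δ Δ₁ ∧ StepD (some a) Δ₁ Δ₂ ∧ TauStar Δ₂ Θ

/-- `Δ ==α̂==> Θ`, which is `==τ̂==>` when `α = τ`. -/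
def Weak {A : Type} : Option A → Wt (SCSP A) → Wt (SCSP A) → Prop
  | none => TauStar
  | some a => WeakA a

/-- `s ↛X` : the state `s` enables no action from `X ∪ {τ}`. -/
def SRefuses {A : Type} (s : SCSP A) (X : Set A) : Prop :=
  (∀ Δ, ¬ Step s none Δ) ∧ ∀ a ∈ X, ∀ Δ, ¬ Step s (some a) Δ

/-- `Δ ↛X` : every state in the support of `Δ` refuses `X`. -/
def DRefuses {A : Type} (Δ : Wt (SCSP A)) (X : Set A) : Prop :=
  ∀ s ∈ dsupp Δ, SRefuses s X

/-! ### Simulation and failure simulation -/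

/-- `R` is a simulation. -/
def IsSimulation {A : Type} (R : SCSP A → Wt (SCSP A) → Prop) : Prop :=
  ∀ s Θ α Δ, R s Θ → Step s α Δ → ∃ Θ', Weak α Θ Θ' ∧ Lift R Δ Θ'

/-- `R` is a failure simulation. -/
def IsFailureSim {A : Type} (R : SCSP A → Wt (SCSP A) → Prop) : Prop :=
  IsSimulation R ∧
  ∀ s Θ (X : Set A), R s Θ → SRefuses s X → ∃ Θ', TauStar Θ Θ' ∧ DRefuses Θ' X

/-- `s ⊲_S Θ`. -/
def simLE {A : Type} (s : SCSP A) (Θ : Wt (SCSP A)) : Prop :=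
  ∃ R, IsSimulation R ∧ R s Θ

/-- `s ⊲_FS Θ`. -/
def fsimLE {A : Type} (s : SCSP A) (Θ : Wt (SCSP A)) : Prop :=
  ∃ R, IsFailureSim R ∧ R s Θ

/-- The simulation preorder `P ⊑_S Q`. -/
def SimPre {A : Type} (P Q : PCSP A) : Prop :=
  ∃ Θ, TauStar Q.interp Θ ∧ Lift simLE P.interp Θ

/-- The failure simulation preorder `P ⊑_FS Q`. -/
def FSimPre {A : Type} (P Q : PCSP A) : Prop :=
  ∃ Θ, TauStar P.interp Θ ∧ Lift fsimLE Q.interp Θ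
/-! ### Syntactic operations: renaming, and ◻ / ∥ distributed over probabilistic choice -/

mutual
/-- Renaming of actions in a process term. -/
def mapP {A B : Type} (f : A → B) : PCSP A → PCSP B
  | .st s => .st (mapS f s)
  | .pch p P Q => .pch p (mapP f P) (mapP f Q)
def mapS {A B : Type} (f : A → B) : SCSP A → SCSP B
  | .nil => .nil
  | .pre a P => .pre (f a) (mapP f P)
  | .ich P Q => .ich (mapP f P) (mapP f Q)
  | .ech s t => .ech (mapS f s) (mapS f t)
  | .par X s t => .par (f '' X) (mapS f s) (mapS f t)
end

/-- `s ∥_B Q` for a state `s`, distributing over probabilistic choice. -/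
def parCS {A : Type} (B : Set A) (s : SCSP A) : PCSP A → PCSP A
  | .st t => .st (.par B s t)
  | .pch p Q₁ Q₂ => .pch p (parCS B s Q₁) (parCS B s Q₂)

/-- `P ∥_B Q` on processes, distributing over probabilistic choice. -/
def parC {A : Type} (B : Set A) : PCSP A → PCSP A → PCSP A
  | .st s, Q => parCS B s Q
  | .pch p P₁ P₂, Q => .pch p (parC B P₁ Q) (parC B P₂ Q)

/-- `s ◻ Q` for a state `s`, distributing over probabilistic choice. -/
def echCS {A : Type} (s : SCSP A) : PCSP A → PCSP A
  | .st t => .st (.ech s t)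
  | .pch p Q₁ Q₂ => .pch p (echCS s Q₁) (echCS s Q₂)

/-- `P ◻ Q` on processes, distributing over probabilistic choice. -/
def echC {A : Type} : PCSP A → PCSP A → PCSP A
  | .st s, Q => echCS s Q
  | .pch p P₁ P₂, Q => .pch p (echC P₁ Q) (echC P₂ Q)

/-- Finite (nonempty) indexed internal choice `⨅_{i} P i`. -/
def ichFin {A : Type} : (n : ℕ) → (Fin (n+1) → PCSP A) → PCSP A
  | 0, P => P 0
  | n+1, P => .st (.ich (P 0) (ichFin n (fun i => P i.succ)))

/-- Finite (nonempty) indexed probabilistic choice `⊕_{i} p i · P i`. -/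
def pchFin {A : Type} : (n : ℕ) → (Fin (n+1) → ℝ) → (Fin (n+1) → PCSP A) → PCSP A
  | 0, _, P => P 0
  | n+1, p, P => .pch (p 0) (P 0)
      (pchFin n (fun i => p i.succ / (1 - p 0)) (fun i => P i.succ))

/-- Finite (nonempty) indexed external choice of states `◻_{i} s i`. -/
def echFin {A : Type} : (n : ℕ) → (Fin (n+1) → SCSP A) → SCSP A
  | 0, s => s 0
  | n+1, s => .ech (s 0) (echFin n (fun i => s i.succ))

/-- External choice of a list of states (empty list gives `0`). -/
def echList {A : Type} : List (SCSP A) → SCSP A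
  | [] => .nil
  | s :: l => .ech s (echList l)

/-! ### State-based scalar testing -/

/-- The alphabet `Act ∪ {ω}` for ordinary (scalar) tests. -/
abbrev TAct (A : Type) := Sum A Unit

/-- The success action ω. -/
def omA {A : Type} : TAct A := Sum.inr ()

/-- Membership in the state-based results-gathering function `V` (with success action `w`). -/
inductive VMem {B : Type} (w : B) : SCSP B → ℝ → Prop where
  | succ {s : SCSP B} {Δ} : Step s (some w) Δ → VMem w s 1
  | step {s : SCSP B} {α : Option B} {Δ} (f : SCSP B → ℝ) :
      (∀ Θ, ¬ Step s (some w) Θ) → Step s α Δ →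
      (∀ t ∈ dsupp Δ, VMem w t (f t)) → VMem w s (dexp Δ f)
  | stuck {s : SCSP B} : (∀ α Δ, ¬ Step s α Δ) → VMem w s 0

/-- `V(Δ)` : the set of outcomes of a distribution, via choice functions. -/
def VD {B : Type} (w : B) (Δ : Wt (SCSP B)) : Set ℝ :=
  {r | ∃ f : SCSP B → ℝ, (∀ t ∈ dsupp Δ, VMem w t (f t)) ∧ r = dexp Δ f}

/-- The application `T ∥_Act P` of a test to a process. -/
def applyTest {A : Type} (T : PCSP (TAct A)) (P : PCSP A) : PCSP (TAct A) :=
  parC (Set.range Sum.inl) T (mapP Sum.inl P)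

/-- `A(T,P)` : state-based testing outcomes. -/
def Aset {A : Type} (T : PCSP (TAct A)) (P : PCSP A) : Set ℝ :=
  VD omA (applyTest T P).interp

/-- The Hoare preorder on sets of reals. -/
def HoareLE (X Y : Set ℝ) : Prop := ∀ x ∈ X, ∃ y ∈ Y, x ≤ y

/-- The Smyth preorder on sets of reals. -/
def SmythLE (X Y : Set ℝ) : Prop := ∀ y ∈ Y, ∃ x ∈ X, x ≤ y

/-- The may-testing preorder `⊑_pmay`. -/
def PMay {A : Type} (P Q : PCSP A) : Prop :=
  ∀ T : PCSP (TAct A), PWF T → HoareLE (Aset T P) (Aset T Q)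

/-- The must-testing preorder `⊑_pmust`. -/
def PMust {A : Type} (P Q : PCSP A) : Prop :=
  ∀ T : PCSP (TAct A), PWF T → SmythLE (Aset T P) (Aset T Q)

/-! ### Action-based scalar testing -/

/-- Membership in the action-based results-gathering function `V̄`. -/
inductive VBarMem {B : Type} (w : B) : SCSP B → ℝ → Prop where
  | succ {s : SCSP B} {Δ} : Step s (some w) Δ → VBarMem w s 1
  | step {s : SCSP B} {α : Option B} {Δ} (f : SCSP B → ℝ) :
      α ≠ some w → Step s α Δ →
      (∀ t ∈ dsupp Δ, VBarMem w t (f t)) → VBarMem w s (dexp Δ f)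
  | stuck {s : SCSP B} : (∀ α Δ, ¬ Step s α Δ) → VBarMem w s 0

/-- `V̄(Δ)`. -/
def VBarD {B : Type} (w : B) (Δ : Wt (SCSP B)) : Set ℝ :=
  {r | ∃ f : SCSP B → ℝ, (∀ t ∈ dsupp Δ, VBarMem w t (f t)) ∧ r = dexp Δ f}

/-- `Ā(T,P)` : action-based testing outcomes. -/
def AsetBar {A : Type} (T : PCSP (TAct A)) (P : PCSP A) : Set ℝ :=
  VBarD omA (applyTest T P).interp

/-- The action-based may-testing preorder `⊑̄_pmay`. -/
def PMayBar {A : Type} (P Q : PCSP A) : Prop :=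
  ∀ T : PCSP (TAct A), PWF T → HoareLE (AsetBar T P) (AsetBar T Q)

/-- The action-based must-testing preorder `⊑̄_pmust`. -/
def PMustBar {A : Type} (P Q : PCSP A) : Prop :=
  ∀ T : PCSP (TAct A), PWF T → SmythLE (AsetBar T P) (AsetBar T Q)
/-! ### ω-avoiding transitions and the relation ⊲ᵉ_FS -/

/-- `s --α-->_ω Δ` : a transition from a state not enabling the success action `w`. -/
def StepOmega {B : Type} (w : B) (s : SCSP B) (α : Option B) (Δ : Wt (SCSP B)) : Prop :=
  (∀ Θ, ¬ Step s (some w) Θ) ∧ Step s α Δ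

/-- `s --τ̂-->_ω Δ`. -/
def stepTauHatOm {B : Type} (w : B) (s : SCSP B) (Δ : Wt (SCSP B)) : Prop :=
  StepOmega w s none Δ ∨ Δ = dirac s

/-- `==τ̂==>_ω`. -/
def TauStarOm {B : Type} (w : B) : Wt (SCSP B) → Wt (SCSP B) → Prop :=
  Relation.ReflTransGen (Lift (stepTauHatOm w))

/-- `==â==>_ω` for a visible action `a`. -/
def WeakAOm {B : Type} (w : B) (a : B) (Δ Θ : Wt (SCSP B)) : Prop :=
  ∃ Δ₁ Δ₂, TauStarOm w Δ Δ₁ ∧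
    Lift (fun s Φ => StepOmega w s (some a) Φ) Δ₁ Δ₂ ∧ TauStarOm w Δ₂ Θ

/-- `==α̂==>_ω`. -/
def WeakOm {B : Type} (w : B) : Option B → Wt (SCSP B) → Wt (SCSP B) → Prop
  | none => TauStarOm w
  | some a => WeakAOm w a

/-- A postfixed point for the coinductive definition of `⊲ᵉ_FS`. -/
def IsEFailSim {B : Type} (w : B) (R : SCSP B → Wt (SCSP B) → Prop) : Prop :=
  (∀ s Θ α Δ, R s Θ → StepOmega w s α Δ → ∃ Θ', WeakOm w α Θ Θ' ∧ Lift R Δ Θ') ∧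
  (∀ s Θ (X : Set B), R s Θ → w ∈ X → SRefuses s X →
    ∃ Θ', TauStarOm w Θ Θ' ∧ DRefuses Θ' X)

/-- `s ⊲ᵉ_FS Θ` : the largest relation satisfying the transfer properties. -/
def efsimLE {B : Type} (w : B) (s : SCSP B) (Θ : Wt (SCSP B)) : Prop :=
  ∃ R, IsEFailSim w R ∧ R s Θ

/-! ### Vector-based testing with success actions from Ω -/

/-- `α!o` : update the `α`-component of the outcome tuple to 1 if `α` is a success action. -/
def bang {A Om : Type} (α : Option (Sum A Om)) (o : Om → ℝ) : Om → ℝ :=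
  fun w => if α = some (Sum.inr w) then 1 else o w

mutual
/-- Membership in the vector-based convex-closed results-gathering function `V̄↕^Ω`
for states.  -/
inductive WMem : {A Om : Type} → SCSP (Sum A Om) → (Om → ℝ) → Prop where
  | stuck {A Om : Type} {s : SCSP (Sum A Om)} :
      (∀ α Δ, ¬ Step s α Δ) → WMem s (fun _ => 0)
  | step {A Om : Type} {s : SCSP (Sum A Om)} {n : ℕ}
      (p : Fin (n+1) → ℝ) (α : Fin (n+1) → Option (Sum A Om))
      (Δ : Fin (n+1) → Wt (SCSP (Sum A Om))) (o : Fin (n+1) → Om → ℝ) :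
      (∀ i, 0 ≤ p i) → (∑ i, p i = 1) →
      (∀ i, Step s (α i) (Δ i)) →
      (∀ i, WMemD (Δ i) (o i)) →
      WMem s (fun w => ∑ i, p i * bang (α i) (o i) w)
/-- Membership in `V̄↕^Ω` for distributions. -/
inductive WMemD : {A Om : Type} → Wt (SCSP (Sum A Om)) → (Om → ℝ) → Prop where
  | mk {A Om : Type} {Δ : Wt (SCSP (Sum A Om))} (f : SCSP (Sum A Om) → Om → ℝ) :
      (∀ t ∈ dsupp Δ, WMem t (f t)) → WMemD Δ (fun w => ∑ᶠ t, Δ t * f t w)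
end

/-- `V̄↕^Ω(Δ)` as a set of outcome tuples. -/
def WsetD {A Om : Type} (Δ : Wt (SCSP (Sum A Om))) : Set (Om → ℝ) :=
  {o | WMemD Δ o}

/-- The application `T ∥_Act P` of an Ω-test to a process. -/
def applyTestO {A Om : Type} (T : PCSP (Sum A Om)) (P : PCSP A) : PCSP (Sum A Om) :=
  parC (Set.range Sum.inl) T (mapP Sum.inl P)

/-- `A↕^Ω(T,P)` : vector-based testing outcomes of a process. -/
def AO {A Om : Type} (T : PCSP (Sum A Om)) (P : PCSP A) : Set (Om → ℝ) :=
  WsetD (applyTestO T P).interp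

/-- `A↕^Ω(T,Δ)` for a distribution `Δ ∈ D(sCSP)`, via expected values. -/
def AOD {A Om : Type} (T : PCSP (Sum A Om)) (Δ : Wt (SCSP A)) : Set (Om → ℝ) :=
  {o | ∃ g : SCSP A → Om → ℝ,
    (∀ s ∈ dsupp Δ, g s ∈ AO T (.st s)) ∧ o = fun w => ∑ᶠ s, Δ s * g s w}

/-- Hoare preorder on sets of outcome tuples (componentwise order). -/
def HoareLEV {Om : Type} (X Y : Set (Om → ℝ)) : Prop := ∀ x ∈ X, ∃ y ∈ Y, x ≤ y

/-- Smyth preorder on sets of outcome tuples (componentwise order). -/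
def SmythLEV {Om : Type} (X Y : Set (Om → ℝ)) : Prop := ∀ y ∈ Y, ∃ x ∈ X, x ≤ y

/-- The vector-based may-testing preorder `⊑̄^Ω_pmay`. -/
def PMayO {A : Type} (Om : Type) (P Q : PCSP A) : Prop :=
  ∀ T : PCSP (Sum A Om), PWF T → HoareLEV (AO T P) (AO T Q)

/-- The vector-based must-testing preorder `⊑̄^Ω_pmust`. -/
def PMustO {A : Type} (Om : Type) (P Q : PCSP A) : Prop :=
  ∀ T : PCSP (Sum A Om), PWF T → SmythLEV (AO T P) (AO T Q)

/-- The unit outcome vector `ω⃗`. -/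
def unitVec {Om : Type} (w : Om) : Om → ℝ := fun w' => if w' = w then 1 else 0

/-! Occurrence of an action in a process term. -/
mutual
/-- Occurrence of an action in a process term. -/
inductive PUses : {B : Type} → B → PCSP B → Prop where
  | st {B : Type} {b : B} {s} : SUses b s → PUses b (.st s)
  | pchL {B : Type} {b : B} {p P Q} : PUses b P → PUses b (.pch p P Q)
  | pchR {B : Type} {b : B} {p P Q} : PUses b Q → PUses b (.pch p P Q)
inductive SUses : {B : Type} → B → SCSP B → Prop where
  | preAct {B : Type} {b : B} {P} : SUses b (.pre b P)
  | pre {B : Type} {b : B} {a P} : PUses b P → SUses b (.pre a P)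
  | ichL {B : Type} {b : B} {P Q} : PUses b P → SUses b (.ich P Q)
  | ichR {B : Type} {b : B} {P Q} : PUses b Q → SUses b (.ich P Q)
  | echL {B : Type} {b : B} {s t} : SUses b s → SUses b (.ech s t)
  | echR {B : Type} {b : B} {s t} : SUses b t → SUses b (.ech s t)
  | parSet {B : Type} {b : B} {X s t} : b ∈ X → SUses b (.par X s t)
  | parL {B : Type} {b : B} {X s t} : SUses b s → SUses b (.par X s t)
  | parR {B : Type} {b : B} {X s t} : SUses b t → SUses b (.par X s t)
end
/-! ### The modal logic F -/

/-- Modal formulae of the logic `F`. -/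
inductive Form (A : Type) : Type where
  | ref : Set A → Form A
  | dia : A → Form A → Form A
  | conj : (n : ℕ) → (Fin n → Form A) → Form A
  | prob : (n : ℕ) → (Fin n → ℝ) → (Fin n → Form A) → Form A

/-- Well-formed formulae: probabilistic choices carry genuine distributions. -/
inductive WFF {A : Type} : Form A → Prop where
  | ref {X} : WFF (.ref X)
  | dia {a φ} : WFF φ → WFF (.dia a φ)
  | conj {n φs} : (∀ i, WFF (φs i)) → WFF (.conj n φs)
  | prob {n p φs} : (∀ i, 0 ≤ p i) → (∑ i, p i = 1) →
      (∀ i, WFF (φs i)) → WFF (.prob n p φs)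

/-- Formulae of the sublogic `L`: no refusal construct. -/
inductive NoRef {A : Type} : Form A → Prop where
  | dia {a φ} : NoRef φ → NoRef (.dia a φ)
  | conj {n φs} : (∀ i, NoRef (φs i)) → NoRef (.conj n φs)
  | prob {n p φs} : (∀ i, NoRef (φs i)) → NoRef (.prob n p φs)

/-- The satisfaction relation `Δ ⊨ φ`. -/
inductive Sat {A : Type} : Form A → Wt (SCSP A) → Prop where
  | ref {X : Set A} {Δ Δ'} : TauStar Δ Δ' → DRefuses Δ' X → Sat (.ref X) Δ
  | dia {a φ Δ Δ'} : WeakA a Δ Δ' → Sat φ Δ' → Sat (.dia a φ) Δ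
  | conj {n φs Δ} : (∀ i, Sat (φs i) Δ) → Sat (.conj n φs) Δ
  | prob {n} {p : Fin n → ℝ} {φs Δ} (Δs : Fin n → Wt (SCSP A)) :
      (∀ i, Sat (φs i) (Δs i)) →
      TauStar Δ (fun t => ∑ i, p i * Δs i t) →
      Sat (.prob n p φs) Δ

/-- The logical preorder `⊑^L`. -/
def LPre {A : Type} (P Q : PCSP A) : Prop :=
  ∀ φ : Form A, WFF φ → NoRef φ → Sat φ P.interp → Sat φ Q.interp

/-- The logical preorder `⊑^F`. -/
def FPre {A : Type} (P Q : PCSP A) : Prop :=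
  ∀ φ : Form A, WFF φ → Sat φ Q.interp → Sat φ P.interp

mutual
/-- `CharS s φ` : `φ` is an F-characteristic formula `φ_s` of the state `s`. -/
inductive CharS : {A : Type} → SCSP A → Form A → Prop where
  | noTau {A : Type} {s : SCSP A} (n : ℕ) (a : Fin n → A)
      (Δ : Fin n → Wt (SCSP A)) (φ : Fin n → Form A) :
      (∀ Θ, ¬ Step s none Θ) →
      (∀ i, Step s (some (a i)) (Δ i)) →
      (∀ b Θ, Step s (some b) Θ → ∃ i, a i = b ∧ Δ i = Θ) →
      (∀ i, CharD (Δ i) (φ i)) →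
      CharS s (.conj (n+1) (Fin.snoc (fun i => .dia (a i) (φ i))
        (.ref {b : A | ∀ Θ, ¬ Step s (some b) Θ})))
  | tau {A : Type} {s : SCSP A} (n m : ℕ) (a : Fin n → A)
      (Δ : Fin n → Wt (SCSP A)) (φ : Fin n → Form A)
      (Θs : Fin m → Wt (SCSP A)) (ψ : Fin m → Form A) :
      (∃ Θ, Step s none Θ) →
      (∀ i, Step s (some (a i)) (Δ i)) →
      (∀ b Θ, Step s (some b) Θ → ∃ i, a i = b ∧ Δ i = Θ) →
      (∀ j, Step s none (Θs j)) →
      (∀ Θ, Step s none Θ → ∃ j, Θs j = Θ) →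
      (∀ i, CharD (Δ i) (φ i)) →
      (∀ j, CharD (Θs j) (ψ j)) →
      CharS s (.conj (n+m) (Fin.append (fun i => .dia (a i) (φ i)) ψ))
/-- `CharD Δ φ` : `φ` is an F-characteristic formula `φ_Δ` of the distribution `Δ`. -/
inductive CharD : {A : Type} → Wt (SCSP A) → Form A → Prop where
  | mk {A : Type} {Δ : Wt (SCSP A)} (n : ℕ) (s : Fin n → SCSP A) (φ : Fin n → Form A) :
      Function.Injective s →
      (∀ i, s i ∈ dsupp Δ) →
      (∀ t ∈ dsupp Δ, ∃ i, s i = t) →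
      (∀ i, CharS (s i) (φ i)) →
      CharD Δ (.prob n (fun i => Δ (s i)) φ)
end

mutual
/-- `CharSL s ψ` : `ψ` is an L-characteristic formula `ψ_s` of the state `s`. -/
inductive CharSL : {A : Type} → SCSP A → Form A → Prop where
  | noTau {A : Type} {s : SCSP A} (n : ℕ) (a : Fin n → A)
      (Δ : Fin n → Wt (SCSP A)) (φ : Fin n → Form A) :
      (∀ Θ, ¬ Step s none Θ) →
      (∀ i, Step s (some (a i)) (Δ i)) →
      (∀ b Θ, Step s (some b) Θ → ∃ i, a i = b ∧ Δ i = Θ) →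
      (∀ i, CharDL (Δ i) (φ i)) →
      CharSL s (.conj n (fun i => .dia (a i) (φ i)))
  | tau {A : Type} {s : SCSP A} (n m : ℕ) (a : Fin n → A)
      (Δ : Fin n → Wt (SCSP A)) (φ : Fin n → Form A)
      (Θs : Fin m → Wt (SCSP A)) (ψ : Fin m → Form A) :
      (∃ Θ, Step s none Θ) →
      (∀ i, Step s (some (a i)) (Δ i)) →
      (∀ b Θ, Step s (some b) Θ → ∃ i, a i = b ∧ Δ i = Θ) →
      (∀ j, Step s none (Θs j)) →
      (∀ Θ, Step s none Θ → ∃ j, Θs j = Θ) →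
      (∀ i, CharDL (Δ i) (φ i)) →
      (∀ j, CharDL (Θs j) (ψ j)) →
      CharSL s (.conj (n+m) (Fin.append (fun i => .dia (a i) (φ i)) ψ))
/-- `CharDL Δ ψ` : `ψ` is an L-characteristic formula `ψ_Δ` of the distribution `Δ`. -/
inductive CharDL : {A : Type} → Wt (SCSP A) → Form A → Prop where
  | mk {A : Type} {Δ : Wt (SCSP A)} (n : ℕ) (s : Fin n → SCSP A) (φ : Fin n → Form A) :
      Function.Injective s →
      (∀ i, s i ∈ dsupp Δ) →
      (∀ t ∈ dsupp Δ, ∃ i, s i = t) →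
      (∀ i, CharSL (s i) (φ i)) →
      CharDL Δ (.prob n (fun i => Δ (s i)) φ)
end
/-! ### The sub-language nCSP and (in)equational theories -/

mutual
/-- Membership in `nCSP`: no parallel composition. -/
inductive PNoPar : {A : Type} → PCSP A → Prop where
  | st {A : Type} {s : SCSP A} : SNoPar s → PNoPar (.st s)
  | pch {A : Type} {p : ℝ} {P Q : PCSP A} : PNoPar P → PNoPar Q → PNoPar (.pch p P Q)
inductive SNoPar : {A : Type} → SCSP A → Prop where
  | nil {A : Type} : SNoPar (SCSP.nil (A := A))
  | pre {A : Type} {a : A} {P} : PNoPar P → SNoPar (.pre a P)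
  | ich {A : Type} {P Q : PCSP A} : PNoPar P → PNoPar Q → SNoPar (.ich P Q)
  | ech {A : Type} {s t : SCSP A} : SNoPar s → SNoPar t → SNoPar (.ech s t)
end

/-- Initial actions of a state-based term (`none` denotes τ). -/
def initsS {A : Type} : SCSP A → Set (Option A)
  | .nil => ∅
  | .pre a _ => {some a}
  | .ich _ _ => {none}
  | .ech s t => initsS s ∪ initsS t
  | .par _ s t => initsS s ∪ initsS t

/-- Initial actions of a process term. -/
def initsP {A : Type} : PCSP A → Set (Option A)
  | .st s => initsS s
  | .pch _ P Q => initsP P ∪ initsP Q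

/-- Derivability in the equational theory `=_E` of Figure 3. -/
inductive EqE {A : Type} : PCSP A → PCSP A → Prop where
  | refl (P) : EqE P P
  | symm {P Q} : EqE P Q → EqE Q P
  | trans {P Q R} : EqE P Q → EqE Q R → EqE P R
  | congPre (a : A) {P Q} : EqE P Q → EqE (.st (.pre a P)) (.st (.pre a Q))
  | congIch {P₁ P₂ Q₁ Q₂} : EqE P₁ Q₁ → EqE P₂ Q₂ →
      EqE (.st (.ich P₁ P₂)) (.st (.ich Q₁ Q₂))
  | congEch {P₁ P₂ Q₁ Q₂} : EqE P₁ Q₁ → EqE P₂ Q₂ →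
      EqE (echC P₁ P₂) (echC Q₁ Q₂)
  | congPch (p : ℝ) {P₁ P₂ Q₁ Q₂} : EqE P₁ Q₁ → EqE P₂ Q₂ →
      EqE (.pch p P₁ P₂) (.pch p Q₁ Q₂)
  | P1 (p : ℝ) (h₀ : 0 < p) (h₁ : p < 1) (P) : EqE (.pch p P P) P
  | P2 (p : ℝ) (h₀ : 0 < p) (h₁ : p < 1) (P Q) :
      EqE (.pch p P Q) (.pch (1-p) Q P)
  | P3 (p q : ℝ) (hp₀ : 0 < p) (hp₁ : p < 1) (hq₀ : 0 < q) (hq₁ : q < 1) (P Q R) :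
      EqE (.pch q (.pch p P Q) R)
          (.pch (p*q) P (.pch ((1-p)*q/(1-p*q)) Q R))
  | I1 (P) : EqE (.st (.ich P P)) P
  | I2 (P Q) : EqE (.st (.ich P Q)) (.st (.ich Q P))
  | I3 (P Q R) : EqE (.st (.ich (.st (.ich P Q)) R)) (.st (.ich P (.st (.ich Q R))))
  | E1 (P) : EqE (echC P (.st .nil)) P
  | E2 (P Q) : EqE (echC P Q) (echC Q P)
  | E3 (P Q R) : EqE (echC (echC P Q) R) (echC P (echC Q R))
  | EI (a : A) (P Q) :
      EqE (echC (.st (.pre a P)) (.st (.pre a Q)))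
          (.st (.ich (.st (.pre a P)) (.st (.pre a Q))))
  | D1 (p : ℝ) (h₀ : 0 < p) (h₁ : p < 1) (P Q R) :
      EqE (echC P (.pch p Q R)) (.pch p (echC P Q) (echC P R))
  | D2 (a : A) (P Q R) :
      EqE (echC (.st (.pre a P)) (.st (.ich Q R)))
          (.st (.ich (echC (.st (.pre a P)) Q) (echC (.st (.pre a P)) R)))
  | D3 (P₁ P₂ Q₁ Q₂) :
      EqE (echC (.st (.ich P₁ P₂)) (.st (.ich Q₁ Q₂)))
          (.st (.ich
            (.st (.ich (echC P₁ (.st (.ich Q₁ Q₂))) (echC P₂ (.st (.ich Q₁ Q₂)))))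
            (.st (.ich (echC (.st (.ich P₁ P₂)) Q₁) (echC (.st (.ich P₁ P₂)) Q₂)))))

/-- Derivability from the probabilistic axioms P1–P3 and D1 only (`=_prob`). -/
inductive EqProb {A : Type} : PCSP A → PCSP A → Prop where
  | refl (P) : EqProb P P
  | symm {P Q} : EqProb P Q → EqProb Q P
  | trans {P Q R} : EqProb P Q → EqProb Q R → EqProb P R
  | congPre (a : A) {P Q} : EqProb P Q → EqProb (.st (.pre a P)) (.st (.pre a Q))
  | congIch {P₁ P₂ Q₁ Q₂} : EqProb P₁ Q₁ → EqProb P₂ Q₂ →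
      EqProb (.st (.ich P₁ P₂)) (.st (.ich Q₁ Q₂))
  | congEch {P₁ P₂ Q₁ Q₂} : EqProb P₁ Q₁ → EqProb P₂ Q₂ →
      EqProb (echC P₁ P₂) (echC Q₁ Q₂)
  | congPch (p : ℝ) {P₁ P₂ Q₁ Q₂} : EqProb P₁ Q₁ → EqProb P₂ Q₂ →
      EqProb (.pch p P₁ P₂) (.pch p Q₁ Q₂)
  | P1 (p : ℝ) (h₀ : 0 < p) (h₁ : p < 1) (P) : EqProb (.pch p P P) P
  | P2 (p : ℝ) (h₀ : 0 < p) (h₁ : p < 1) (P Q) :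
      EqProb (.pch p P Q) (.pch (1-p) Q P)
  | P3 (p q : ℝ) (hp₀ : 0 < p) (hp₁ : p < 1) (hq₀ : 0 < q) (hq₁ : q < 1) (P Q R) :
      EqProb (.pch q (.pch p P Q) R)
          (.pch (p*q) P (.pch ((1-p)*q/(1-p*q)) Q R))
  | D1 (p : ℝ) (h₀ : 0 < p) (h₁ : p < 1) (P Q R) :
      EqProb (echC P (.pch p Q R)) (.pch p (echC P Q) (echC P R))

mutual
/-- Normal forms. -/
inductive IsNF : {A : Type} → PCSP A → Prop where
  | pch {A : Type} {p : ℝ} {N₁ N₂ : PCSP A} : 0 < p → p < 1 →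
      IsNF N₁ → IsNF N₂ → IsNF (.pch p N₁ N₂)
  | ich {A : Type} {N₁ N₂ : PCSP A} : IsNF N₁ → IsNF N₂ → IsNF (.st (.ich N₁ N₂))
  | ext {A : Type} {s : SCSP A} : IsExtNF s → IsNF (.st s)
/-- External-choice normal forms `◻_{i∈I} a_i.N_i`. -/
inductive IsExtNF : {A : Type} → SCSP A → Prop where
  | nil {A : Type} : IsExtNF (SCSP.nil (A := A))
  | pre {A : Type} {a : A} {N} : IsNF N → IsExtNF (.pre a N)
  | ech {A : Type} {s t : SCSP A} : IsExtNF s → IsExtNF t → IsExtNF (.ech s t)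
end

/-- Derivability in the inequational theory for may testing (`⊑_Emay`). -/
inductive LeMay {A : Type} : PCSP A → PCSP A → Prop where
  | ofEq {P Q} : EqE P Q → LeMay P Q
  | trans {P Q R} : LeMay P Q → LeMay Q R → LeMay P R
  | congPre (a : A) {P Q} : LeMay P Q → LeMay (.st (.pre a P)) (.st (.pre a Q))
  | congIch {P₁ P₂ Q₁ Q₂} : LeMay P₁ Q₁ → LeMay P₂ Q₂ →
      LeMay (.st (.ich P₁ P₂)) (.st (.ich Q₁ Q₂))
  | congEch {P₁ P₂ Q₁ Q₂} : LeMay P₁ Q₁ → LeMay P₂ Q₂ →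
      LeMay (echC P₁ P₂) (echC Q₁ Q₂)
  | congPch (p : ℝ) {P₁ P₂ Q₁ Q₂} : LeMay P₁ Q₁ → LeMay P₂ Q₂ →
      LeMay (.pch p P₁ P₂) (.pch p Q₁ Q₂)
  | may0 (a b : A) (P Q) :
      LeMay (echC (.st (.pre a P)) (.st (.pre b Q)))
            (.st (.ich (.st (.pre a P)) (.st (.pre b Q))))
  | may0' (a b : A) (P Q) :
      LeMay (.st (.ich (.st (.pre a P)) (.st (.pre b Q))))
            (echC (.st (.pre a P)) (.st (.pre b Q)))
  | may1 (P Q) : LeMay P (.st (.ich P Q))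
  | may2 (P) : LeMay (.st .nil) P
  | may3 (a : A) (p : ℝ) (h₀ : 0 < p) (h₁ : p < 1) (P Q) :
      LeMay (.st (.pre a (.pch p P Q))) (.pch p (.st (.pre a P)) (.st (.pre a Q)))

/-- Derivability in the inequational theory for must testing (`⊑_Emust`). -/
inductive LeMust {A : Type} : PCSP A → PCSP A → Prop where
  | ofEq {P Q} : EqE P Q → LeMust P Q
  | trans {P Q R} : LeMust P Q → LeMust Q R → LeMust P R
  | congPre (a : A) {P Q} : LeMust P Q → LeMust (.st (.pre a P)) (.st (.pre a Q))
  | congIch {P₁ P₂ Q₁ Q₂} : LeMust P₁ Q₁ → LeMust P₂ Q₂ →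
      LeMust (.st (.ich P₁ P₂)) (.st (.ich Q₁ Q₂))
  | congEch {P₁ P₂ Q₁ Q₂} : LeMust P₁ Q₁ → LeMust P₂ Q₂ →
      LeMust (echC P₁ P₂) (echC Q₁ Q₂)
  | congPch (p : ℝ) {P₁ P₂ Q₁ Q₂} : LeMust P₁ Q₁ → LeMust P₂ Q₂ →
      LeMust (.pch p P₁ P₂) (.pch p Q₁ Q₂)
  | must1 (P Q) : LeMust (.st (.ich P Q)) Q
  | must2 (n : ℕ) (a : Fin (n+1) → A) (m : Fin (n+1) → ℕ)
      (p : (i : Fin (n+1)) → Fin (m i + 1) → ℝ)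
      (Q : (i : Fin (n+1)) → Fin (m i + 1) → PCSP A)
      (P : (i : Fin (n+1)) → Fin (m i + 1) → PCSP A)
      (R : PCSP A) :
      (∀ i j, 0 ≤ p i j) → (∀ i, ∑ j, p i j = 1) →
      initsP R ⊆ {α | ∃ i, α = some (a i)} →
      LeMust
        (.st (.ich R (ichFin n (fun i =>
          pchFin (m i) (p i) (fun j => echC (.st (.pre (a i) (Q i j))) (P i j))))))
        (.st (echFin n (fun i => .pre (a i) (pchFin (m i) (p i) (Q i)))))
/-! ### Auxiliary development for the soundness proof -/

section Aux

variable {X Y Z : Type}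

/-- Finitely supported weight function. -/
abbrev FS {X : Type} (Δ : Wt X) : Prop := (dsupp Δ).Finite

/-- Total mass. -/
def mass {X : Type} (Δ : Wt X) : ℝ := ∑ᶠ x, Δ x

lemma mem_dsupp {Δ : Wt X} {x : X} : x ∈ dsupp Δ ↔ Δ x ≠ 0 := Iff.rfl

lemma dexp_eq_sum {Δ : Wt X} {f : X → ℝ} {s : Finset X} (hs : dsupp Δ ⊆ ↑s) :
    dexp Δ f = ∑ x ∈ s, Δ x * f x := by
  apply finsum_eq_sum_of_support_subset
  intro x hx
  apply hs
  intro h0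
  simp [Wt, h0] at hx

lemma mass_eq_sum {Δ : Wt X} {s : Finset X} (hs : dsupp Δ ⊆ ↑s) :
    mass Δ = ∑ x ∈ s, Δ x :=
  finsum_eq_sum_of_support_subset _ hs

lemma mass_eq_dexp_one (Δ : Wt X) : mass Δ = dexp Δ (fun _ => 1) := by
  unfold mass dexp; congr 1; funext x; ring

lemma dexp_congr {Δ : Wt X} {f g : X → ℝ} (h : ∀ x ∈ dsupp Δ, f x = g x) :
    dexp Δ f = dexp Δ g := by
  unfold dexp; congr 1; funext x
  by_cases hx : Δ x = 0
  · simp [Wt, hx]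
  · rw [h x hx]

lemma dexp_mono {Δ : Wt X} {f g : X → ℝ} (hΔ : FS Δ)
    (hpos : ∀ x ∈ dsupp Δ, 0 ≤ Δ x) (hfg : ∀ x ∈ dsupp Δ, f x ≤ g x) :
    dexp Δ f ≤ dexp Δ g := by
  rw [dexp_eq_sum (s := hΔ.toFinset) (by simp), dexp_eq_sum (s := hΔ.toFinset) (by simp)]
  apply Finset.sum_le_sum
  intro x hx
  rw [Set.Finite.mem_toFinset] at hx
  exact mul_le_mul_of_nonneg_left (hfg x hx) (hpos x hx)

lemma dexp_dirac (x : X) (f : X → ℝ) : dexp (dirac x) f = f x := by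
  have hs : dsupp (dirac x) ⊆ ↑({x} : Finset X) := by
    intro y hy
    simp only [mem_dsupp, dirac] at hy
    by_contra h
    simp only [Finset.coe_singleton, Set.mem_singleton_iff] at h
    simp [h] at hy
  rw [dexp_eq_sum hs]
  simp [dirac]

lemma mass_dirac (x : X) : mass (dirac x) = 1 := by
  rw [mass_eq_dexp_one, dexp_dirac]

lemma fs_dirac (x : X) : FS (dirac x) := by
  apply Set.Finite.subset (Set.finite_singleton x)
  intro y hy
  simp only [mem_dsupp, dirac] at hy
  by_contra h
  simp only [Set.mem_singleton_iff] at h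
  simp [h] at hy

lemma dirac_nonneg (x y : X) : 0 ≤ dirac x y := by
  unfold dirac; split <;> norm_num

/-- Linearity of `dexp` for finite combinations. -/
lemma dexp_combo {n : ℕ} {p : Fin n → ℝ} {Φ : Fin n → Wt X}
    (hΦ : ∀ i, p i ≠ 0 → FS (Φ i)) (f : X → ℝ) :
    dexp (fun x => ∑ i, p i * Φ i x) f = ∑ i, p i * dexp (Φ i) f := by
  classical
  set Φ' : Fin n → Wt X := fun i => if p i = 0 then 0 else Φ i with hΦ'
  have hpt : ∀ i x, p i * Φ i x = p i * Φ' i x := by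
    intro i x
    by_cases h : p i = 0 <;> simp [Φ', h]
  have hfin : ∀ i, FS (Φ' i) := by
    intro i
    by_cases h : p i = 0
    · simp only [Φ', h, if_true]
      apply Set.Finite.subset (Set.finite_empty)
      intro x hx; simp [mem_dsupp] at hx
    · simp only [Φ', h, if_false]; exact hΦ i h
  have hrw : ∀ i, p i * dexp (Φ i) f = p i * dexp (Φ' i) f := by
    intro i
    by_cases h : p i = 0 <;> simp [Φ', h]
  rw [show (fun x => ∑ i, p i * Φ i x) = (fun x => ∑ i, p i * Φ' i x) by
    funext x; exact Finset.sum_congr rfl (fun i _ => hpt i x)]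
  rw [Finset.sum_congr rfl (fun i _ => hrw i)]
  -- now all Φ' i have finite support
  have hUfin : (⋃ i, dsupp (Φ' i)).Finite := Set.finite_iUnion hfin
  set S : Finset X := hUfin.toFinset with hS
  have hsub : ∀ i, dsupp (Φ' i) ⊆ ↑S := by
    intro i x hx
    simp only [hS, Set.Finite.coe_toFinset]
    exact Set.mem_iUnion.mpr ⟨i, hx⟩
  have hsub2 : dsupp (fun x => ∑ i, p i * Φ' i x) ⊆ ↑S := by
    intro x hx
    rw [mem_dsupp] at hx
    by_contra hxS
    apply hx
    apply Finset.sum_eq_zero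
    intro i _
    have : Φ' i x = 0 := by
      by_contra h0
      exact hxS (hsub i h0)
    simp [this]
  rw [dexp_eq_sum hsub2]
  calc ∑ x ∈ S, (∑ i, p i * Φ' i x) * f x
      = ∑ x ∈ S, ∑ i, p i * (Φ' i x * f x) := by
        apply Finset.sum_congr rfl; intro x _; rw [Finset.sum_mul]
        apply Finset.sum_congr rfl; intro i _; ring
    _ = ∑ i, ∑ x ∈ S, p i * (Φ' i x * f x) := Finset.sum_comm
    _ = ∑ i, p i * dexp (Φ' i) f := by
        apply Finset.sum_congr rfl; intro i _
        rw [dexp_eq_sum (hsub i), Finset.mul_sum]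

lemma mass_combo {n : ℕ} {p : Fin n → ℝ} {Φ : Fin n → Wt X}
    (hΦ : ∀ i, p i ≠ 0 → FS (Φ i)) :
    mass (fun x => ∑ i, p i * Φ i x) = ∑ i, p i * mass (Φ i) := by
  rw [mass_eq_dexp_one, dexp_combo hΦ]
  exact Finset.sum_congr rfl fun i _ => by rw [mass_eq_dexp_one]

lemma fs_combo {n : ℕ} {p : Fin n → ℝ} {Φ : Fin n → Wt X}
    (hΦ : ∀ i, p i ≠ 0 → FS (Φ i)) : FS (fun x => ∑ i, p i * Φ i x) := by
  classical
  have hfin : (⋃ i ∈ {i : Fin n | p i ≠ 0}, dsupp (Φ i)).Finite :=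
    Set.Finite.biUnion (Set.finite_univ.subset (Set.subset_univ _)) (fun i hi => hΦ i hi)
  apply hfin.subset
  intro x hx
  rw [mem_dsupp] at hx
  have : ∃ i, p i * Φ i x ≠ 0 := by
    by_contra hc
    push_neg at hc
    exact hx (Finset.sum_eq_zero fun i _ => hc i)
  obtain ⟨i, hi⟩ := this
  have hp : p i ≠ 0 := fun h => hi (by simp [h])
  have hφ : Φ i x ≠ 0 := fun h => hi (by simp [h])
  exact Set.mem_biUnion hp hφ

/-- the canonical decomposition: a finite nonneg mass-one weight function
equals a dirac combination over its support. -/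
lemma dmap_ne_zero {g : X → Y} {Δ : Wt X} {y : Y} (h : dmap g Δ y ≠ 0) :
    ∃ x, g x = y ∧ Δ x ≠ 0 := by
  by_contra hc
  push_neg at hc
  apply h
  unfold dmap
  apply finsum_mem_of_eqOn_zero
  intro x hx
  exact hc x hx

lemma dsupp_dmap {g : X → Y} {Δ : Wt X} : dsupp (dmap g Δ) ⊆ g '' dsupp Δ := by
  intro y hy
  obtain ⟨x, hgx, hx⟩ := dmap_ne_zero hy
  exact ⟨x, hx, hgx⟩

lemma fs_dmap {g : X → Y} {Δ : Wt X} (h : FS Δ) : FS (dmap g Δ) :=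
  (h.image g).subset dsupp_dmap

lemma dmap_eq_sum {g : X → Y} {Δ : Wt X} {S : Finset X} (hS : dsupp Δ ⊆ ↑S) (y : Y) :
    dmap g Δ y = ∑ x ∈ S.filter (fun x => g x = y), Δ x := by
  unfold dmap
  apply finsum_mem_eq_sum_of_inter_support_eq
  ext x
  simp only [Set.mem_inter_iff, Set.mem_setOf_eq, Finset.coe_filter, Function.mem_support]
  constructor
  · rintro ⟨h1, h2⟩; exact ⟨⟨hS h2, h1⟩, h2⟩
  · rintro ⟨⟨_, h1⟩, h2⟩; exact ⟨h1, h2⟩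

lemma dexp_dmap {g : X → Y} {Δ : Wt X} (hΔ : FS Δ) (f : Y → ℝ) :
    dexp (dmap g Δ) f = dexp Δ (fun x => f (g x)) := by
  classical
  set S : Finset X := hΔ.toFinset with hSdef
  have hS : dsupp Δ ⊆ ↑S := by simp [hSdef]
  set T : Finset Y := S.image g with hTdef
  have hT : dsupp (dmap g Δ) ⊆ ↑T := by
    intro y hy
    obtain ⟨x, hgx, hx⟩ := dmap_ne_zero hy
    simp only [hTdef, Finset.coe_image]
    exact ⟨x, hS hx, hgx⟩
  rw [dexp_eq_sum hT, dexp_eq_sum hS]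
  have : ∀ y ∈ T, dmap g Δ y * f y = ∑ x ∈ S.filter (fun x => g x = y), Δ x * f (g x) := by
    intro y _
    rw [dmap_eq_sum hS y, Finset.sum_mul]
    apply Finset.sum_congr rfl
    intro x hx
    rw [Finset.mem_filter] at hx
    rw [hx.2]
  rw [Finset.sum_congr rfl this]
  exact Finset.sum_fiberwise_of_maps_to (fun x hx => Finset.mem_image_of_mem g hx) _

lemma mass_dmap {g : X → Y} {Δ : Wt X} (hΔ : FS Δ) : mass (dmap g Δ) = mass Δ := by
  rw [mass_eq_dexp_one, dexp_dmap hΔ, ← mass_eq_dexp_one]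

lemma dmap_nonneg {g : X → Y} {Δ : Wt X} (h : ∀ x, 0 ≤ Δ x) (y : Y) :
    0 ≤ dmap g Δ y := by
  unfold dmap
  rw [finsum_mem_def]
  apply finsum_nonneg
  intro x
  exact Set.indicator_nonneg (fun x _ => h x) x

end Aux

section Aux2
variable {X Y Z : Type}

lemma le_dmap_self {g : X → Y} {Δ : Wt X} (hΔ : FS Δ) (h : ∀ x, 0 ≤ Δ x) (x : X) :
    Δ x ≤ dmap g Δ (g x) := by
  classical
  by_cases h0 : Δ x = 0
  · rw [h0]; exact dmap_nonneg h _
  · have hS : dsupp Δ ⊆ ↑hΔ.toFinset := by simp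
    rw [dmap_eq_sum hS]
    apply Finset.single_le_sum (f := fun x => Δ x) (fun i _ => h i)
    refine Finset.mem_filter.mpr ⟨?_, rfl⟩
    simpa using (mem_dsupp.mpr h0)

lemma dmap_comp {g : Y → Z} {h : X → Y} {Δ : Wt X} (hΔ : FS Δ) :
    dmap g (dmap h Δ) = dmap (fun x => g (h x)) Δ := by
  classical
  funext z
  set S : Finset X := hΔ.toFinset with hSdef
  have hS : dsupp Δ ⊆ ↑S := by simp [hSdef]
  set T : Finset Y := S.image h with hTdef
  have hT : dsupp (dmap h Δ) ⊆ ↑T := by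
    intro y hy
    obtain ⟨x, hgx, hx⟩ := dmap_ne_zero hy
    simp only [hTdef, Finset.coe_image]
    exact ⟨x, hS hx, hgx⟩
  rw [dmap_eq_sum hT, dmap_eq_sum hS]
  have hmaps : ∀ x ∈ S.filter (fun x => g (h x) = z), h x ∈ T.filter (fun y => g y = z) := by
    intro x hx
    rw [Finset.mem_filter] at hx ⊢
    exact ⟨Finset.mem_image_of_mem h hx.1, hx.2⟩
  rw [← Finset.sum_fiberwise_of_maps_to hmaps (fun x => Δ x)]
  apply Finset.sum_congr rfl
  intro y hy
  rw [Finset.mem_filter] at hy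
  rw [dmap_eq_sum hS]
  apply Finset.sum_congr _ (fun _ _ => rfl)
  rw [Finset.filter_filter]
  apply Finset.filter_congr
  intro x _
  constructor
  · intro hx; exact ⟨by rw [hx]; exact hy.2, hx⟩
  · exact fun hx => hx.2

lemma fs_prod {Δ : Wt X} {Θ : Wt Y} (hΔ : FS Δ) (hΘ : FS Θ) :
    FS (fun q : X × Y => Δ q.1 * Θ q.2) := by
  apply (hΔ.prod hΘ).subset
  rintro ⟨x, y⟩ hq
  rw [mem_dsupp] at hq
  exact ⟨fun h0 => hq (by simp [h0]), fun h0 => hq (by simp [h0])⟩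

lemma dexp_prod {Δ : Wt X} {Θ : Wt Y} (hΔ : FS Δ) (hΘ : FS Θ) (F : X × Y → ℝ) :
    dexp (fun q : X × Y => Δ q.1 * Θ q.2) F
      = dexp Δ (fun x => dexp Θ (fun y => F (x, y))) := by
  classical
  have hsub : dsupp (fun q : X × Y => Δ q.1 * Θ q.2) ⊆ ↑(hΔ.toFinset ×ˢ hΘ.toFinset) := by
    rintro ⟨x, y⟩ hq
    rw [mem_dsupp] at hq
    simp only [Finset.coe_product, Set.mem_prod, Set.Finite.coe_toFinset]
    exact ⟨fun h0 => hq (by simp [h0]), fun h0 => hq (by simp [h0])⟩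
  rw [dexp_eq_sum hsub, dexp_eq_sum (show dsupp Δ ⊆ ↑hΔ.toFinset by simp)]
  rw [Finset.sum_product]
  apply Finset.sum_congr rfl
  intro x _
  rw [dexp_eq_sum (show dsupp Θ ⊆ ↑hΘ.toFinset by simp), Finset.mul_sum]
  apply Finset.sum_congr rfl
  intro y _
  ring

lemma dexp_const {Δ : Wt X} (hΔ : FS Δ) (c : ℝ) : dexp Δ (fun _ => c) = mass Δ * c := by
  rw [dexp_eq_sum (show dsupp Δ ⊆ ↑hΔ.toFinset by simp),
    mass_eq_sum (show dsupp Δ ⊆ ↑hΔ.toFinset by simp), Finset.sum_mul]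

lemma mass_prod {Δ : Wt X} {Θ : Wt Y} (hΔ : FS Δ) (hΘ : FS Θ) :
    mass (fun q : X × Y => Δ q.1 * Θ q.2) = mass Δ * mass Θ := by
  rw [mass_eq_dexp_one, dexp_prod hΔ hΘ]
  have h1 : (fun x : X => dexp Θ fun _ => 1) = fun _ : X => mass Θ := by
    funext x; rw [← mass_eq_dexp_one]
  rw [h1, dexp_const hΔ]

end Aux2

section Aux3
variable {X Y : Type}

lemma dexp_add2 {Δ Θ : Wt X} (a b : ℝ) (hΔ : FS Δ) (hΘ : FS Θ) (f : X → ℝ) :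
    dexp (fun x => a * Δ x + b * Θ x) f = a * dexp Δ f + b * dexp Θ f := by
  classical
  set S : Finset X := (hΔ.union hΘ).toFinset with hSdef
  have hsΔ : dsupp Δ ⊆ ↑S := by
    intro x hx; simp only [hSdef, Set.Finite.coe_toFinset]; exact Or.inl hx
  have hsΘ : dsupp Θ ⊆ ↑S := by
    intro x hx; simp only [hSdef, Set.Finite.coe_toFinset]; exact Or.inr hx
  have hs : dsupp (fun x => a * Δ x + b * Θ x) ⊆ ↑S := by
    intro x hx
    rw [mem_dsupp] at hx
    by_contra hxS
    have h1 : Δ x = 0 := by by_contra h0; exact hxS (hsΔ h0)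
    have h2 : Θ x = 0 := by by_contra h0; exact hxS (hsΘ h0)
    simp [h1, h2] at hx
  rw [dexp_eq_sum hs, dexp_eq_sum hsΔ, dexp_eq_sum hsΘ, Finset.mul_sum, Finset.mul_sum,
    ← Finset.sum_add_distrib]
  apply Finset.sum_congr rfl
  intro x _
  ring

lemma mass_add2 {Δ Θ : Wt X} (a b : ℝ) (hΔ : FS Δ) (hΘ : FS Θ) :
    mass (fun x => a * Δ x + b * Θ x) = a * mass Δ + b * mass Θ := by
  rw [mass_eq_dexp_one, dexp_add2 a b hΔ hΘ, mass_eq_dexp_one, mass_eq_dexp_one]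

lemma fs_add2 {Δ Θ : Wt X} (a b : ℝ) (hΔ : FS Δ) (hΘ : FS Θ) :
    FS (fun x => a * Δ x + b * Θ x) := by
  apply (hΔ.union hΘ).subset
  intro x hx
  rw [mem_dsupp] at hx
  by_contra hxS
  rw [Set.mem_union] at hxS
  push_neg at hxS
  have h1 : Δ x = 0 := by by_contra h0; exact hxS.1 h0
  have h2 : Θ x = 0 := by by_contra h0; exact hxS.2 h0
  simp [h1, h2] at hx

end Aux3

/-! ### Sizes -/

mutual
def sizeP {A : Type} : PCSP A → ℕ
  | .st s => sizeS s
  | .pch _ P Q => max (sizeP P) (sizeP Q)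
def sizeS {A : Type} : SCSP A → ℕ
  | .nil => 1
  | .pre _ P => sizeP P + 1
  | .ich P Q => max (sizeP P) (sizeP Q) + 1
  | .ech s t => sizeS s + sizeS t + 1
  | .par _ s t => sizeS s + sizeS t + 1
end

theorem interp_fs {A : Type} : ∀ P : PCSP A, FS P.interp
  | .st s => fs_dirac s
  | .pch p P Q => by
      have h1 := interp_fs P
      have h2 := interp_fs Q
      exact fs_add2 p (1 - p) h1 h2

theorem interp_mass {A : Type} : ∀ P : PCSP A, mass P.interp = 1
  | .st s => mass_dirac s
  | .pch p P Q => by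
      have h1 := interp_mass P
      have h2 := interp_mass Q
      show mass (fun t => p * P.interp t + (1 - p) * Q.interp t) = 1
      rw [mass_add2 p (1 - p) (interp_fs P) (interp_fs Q), h1, h2]
      ring

theorem interp_size {A : Type} : ∀ P : PCSP A, ∀ t ∈ dsupp P.interp, sizeS t ≤ sizeP P
  | .st s => by
      intro t ht
      rw [mem_dsupp] at ht
      simp only [PCSP.interp, dirac] at ht
      split at ht
      · next h => subst h; simp [sizeP]
      · simp at ht
  | .pch p P Q => by
      intro t ht
      rw [mem_dsupp] at ht
      simp only [PCSP.interp] at ht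
      have : P.interp t ≠ 0 ∨ Q.interp t ≠ 0 := by
        by_contra hc
        push_neg at hc
        simp [hc.1, hc.2] at ht
      rcases this with h | h
      · exact le_trans (interp_size P t h) (by simp [sizeP])
      · exact le_trans (interp_size Q t h) (by simp [sizeP])

theorem step_fs {C : Type} {s : SCSP C} {α : Option C} {Δ : Wt (SCSP C)}
    (h : Step s α Δ) : FS Δ := by
  induction h with
  | pre a P => exact interp_fs P
  | ichL P Q => exact interp_fs P
  | ichR P Q => exact interp_fs Q
  | echL _ ih => exact ih
  | echR _ ih => exact ih
  | echTL _ ih => exact fs_dmap ih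
  | echTR _ ih => exact fs_dmap ih
  | parL _ _ ih => exact fs_dmap ih
  | parR _ _ ih => exact fs_dmap ih
  | parS _ _ _ ih1 ih2 => exact fs_dmap (fs_prod ih1 ih2)

theorem step_mass {C : Type} {s : SCSP C} {α : Option C} {Δ : Wt (SCSP C)}
    (h : Step s α Δ) : mass Δ = 1 := by
  induction h with
  | pre a P => exact interp_mass P
  | ichL P Q => exact interp_mass P
  | ichR P Q => exact interp_mass Q
  | echL _ ih => exact ih
  | echR _ ih => exact ih
  | echTL h ih => rw [mass_dmap (step_fs h)]; exact ih
  | echTR h ih => rw [mass_dmap (step_fs h)]; exact ih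
  | parL h _ ih => rw [mass_dmap (step_fs h)]; exact ih
  | parR h _ ih => rw [mass_dmap (step_fs h)]; exact ih
  | parS _ h1 h2 ih1 ih2 =>
      rw [mass_dmap (fs_prod (step_fs h1) (step_fs h2)), mass_prod (step_fs h1) (step_fs h2),
        ih1, ih2]
      ring

theorem step_size {C : Type} {s : SCSP C} {α : Option C} {Δ : Wt (SCSP C)}
    (h : Step s α Δ) : ∀ t ∈ dsupp Δ, sizeS t < sizeS s := by
  induction h with
  | pre a P =>
      intro t ht
      have := interp_size P t ht
      simp only [sizeS]
      omega
  | ichL P Q =>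
      intro t ht
      have := interp_size P t ht
      have h2 : sizeP P ≤ max (sizeP P) (sizeP Q) := le_max_left _ _
      simp only [sizeS]
      omega
  | ichR P Q =>
      intro t ht
      have := interp_size Q t ht
      have h2 : sizeP Q ≤ max (sizeP P) (sizeP Q) := le_max_right _ _
      simp only [sizeS]
      omega
  | echL _ ih =>
      intro t ht
      have := ih t ht
      simp only [sizeS]
      omega
  | echR _ ih =>
      intro t ht
      have := ih t ht
      simp only [sizeS]
      omega
  | echTL _ ih =>
      intro t ht
      obtain ⟨x, hgx, hx⟩ := dmap_ne_zero ht
      subst hgx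
      have := ih x hx
      simp only [sizeS]
      omega
  | echTR _ ih =>
      intro t ht
      obtain ⟨x, hgx, hx⟩ := dmap_ne_zero ht
      subst hgx
      have := ih x hx
      simp only [sizeS]
      omega
  | parL _ _ ih =>
      intro t ht
      obtain ⟨x, hgx, hx⟩ := dmap_ne_zero ht
      subst hgx
      have := ih x hx
      simp only [sizeS]
      omega
  | parR _ _ ih =>
      intro t ht
      obtain ⟨x, hgx, hx⟩ := dmap_ne_zero ht
      subst hgx
      have := ih x hx
      simp only [sizeS]
      omega
  | parS _ _ _ ih1 ih2 =>
      intro t ht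
      obtain ⟨⟨x, y⟩, hgx, hx⟩ := dmap_ne_zero ht
      subst hgx
      have h1 : sizeS x < _ := ih1 x (fun h0 => hx (by simp [h0]))
      have h2 : sizeS y < _ := ih2 y (fun h0 => hx (by simp [h0]))
      simp only [sizeS]
      omega

/-! ### Step inversion and finite branching -/

section Inv
variable {C : Type}

lemma step_nil_inv {α : Option C} {Δ} (h : Step (SCSP.nil : SCSP C) α Δ) : False := by
  cases h

lemma step_pre_inv {a : C} {P : PCSP C} {α Δ} (h : Step (.pre a P) α Δ) :
    α = some a ∧ Δ = P.interp := by
  cases h; exact ⟨rfl, rfl⟩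

lemma step_ich_inv {P Q : PCSP C} {α Δ} (h : Step (.ich P Q) α Δ) :
    α = none ∧ (Δ = P.interp ∨ Δ = Q.interp) := by
  cases h
  · exact ⟨rfl, Or.inl rfl⟩
  · exact ⟨rfl, Or.inr rfl⟩

lemma step_ech_inv {s₁ s₂ : SCSP C} {α Δ} (h : Step (.ech s₁ s₂) α Δ) :
    ((∃ a, α = some a) ∧ (Step s₁ α Δ ∨ Step s₂ α Δ)) ∨
    (α = none ∧ ((∃ Δ₁, Step s₁ none Δ₁ ∧ Δ = dmap (fun t => SCSP.ech t s₂) Δ₁) ∨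
      (∃ Δ₂, Step s₂ none Δ₂ ∧ Δ = dmap (fun t => SCSP.ech s₁ t) Δ₂))) := by
  cases h with
  | echL h => exact Or.inl ⟨⟨_, rfl⟩, Or.inl h⟩
  | echR h => exact Or.inl ⟨⟨_, rfl⟩, Or.inr h⟩
  | echTL h => exact Or.inr ⟨rfl, Or.inl ⟨_, h, rfl⟩⟩
  | echTR h => exact Or.inr ⟨rfl, Or.inr ⟨_, h, rfl⟩⟩

lemma step_par_inv {B : Set C} {s₁ s₂ : SCSP C} {α Δ} (h : Step (.par B s₁ s₂) α Δ) :
    (∃ Δ₁, Step s₁ α Δ₁ ∧ (∀ a, α = some a → a ∉ B) ∧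
        Δ = dmap (fun t => SCSP.par B t s₂) Δ₁) ∨
    (∃ Δ₂, Step s₂ α Δ₂ ∧ (∀ a, α = some a → a ∉ B) ∧
        Δ = dmap (fun t => SCSP.par B s₁ t) Δ₂) ∨
    (∃ a Δ₁ Δ₂, α = none ∧ a ∈ B ∧ Step s₁ (some a) Δ₁ ∧ Step s₂ (some a) Δ₂ ∧
        Δ = dmap (fun q : SCSP C × SCSP C => SCSP.par B q.1 q.2) (fun q => Δ₁ q.1 * Δ₂ q.2)) := by
  cases h with
  | parL h hc => exact Or.inl ⟨_, h, hc, rfl⟩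
  | parR h hc => exact Or.inr (Or.inl ⟨_, h, hc, rfl⟩)
  | parS hm h1 h2 => exact Or.inr (Or.inr ⟨_, _, _, rfl, hm, h1, h2, rfl⟩)

/-- The set of outgoing transitions. -/
def StepSet (s : SCSP C) : Set (Option C × Wt (SCSP C)) := {p | Step s p.1 p.2}

theorem step_finite : ∀ s : SCSP C, (StepSet s).Finite
  | .nil => by
      apply Set.Finite.subset (Set.finite_empty)
      rintro ⟨α, Δ⟩ h
      exact absurd h step_nil_inv
  | .pre a P => by
      apply Set.Finite.subset (Set.finite_singleton (some a, P.interp))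
      rintro ⟨α, Δ⟩ h
      obtain ⟨h1, h2⟩ := step_pre_inv h
      simp only [Set.mem_singleton_iff, Prod.mk.injEq]
      exact ⟨h1, h2⟩
  | .ich P Q => by
      apply Set.Finite.subset
        ((Set.finite_singleton ((none : Option C), P.interp)).union
          (Set.finite_singleton (none, Q.interp)))
      rintro ⟨α, Δ⟩ h
      obtain ⟨h1, h2⟩ := step_ich_inv h
      rcases h2 with h2 | h2
      · exact Or.inl (by simp only [Set.mem_singleton_iff, Prod.mk.injEq]; exact ⟨h1, h2⟩)
      · exact Or.inr (by simp only [Set.mem_singleton_iff, Prod.mk.injEq]; exact ⟨h1, h2⟩)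
  | .ech s₁ s₂ => by
      have h1 := step_finite s₁
      have h2 := step_finite s₂
      apply Set.Finite.subset
        (((h1.union h2).union
          ((h1.image (fun p => (p.1, dmap (fun t => SCSP.ech t s₂) p.2))).union
           (h2.image (fun p => (p.1, dmap (fun t => SCSP.ech s₁ t) p.2))))))
      rintro ⟨α, Δ⟩ h
      rcases step_ech_inv h with ⟨-, h | h⟩ | ⟨hn, ⟨Δ₁, hs, hd⟩ | ⟨Δ₂, hs, hd⟩⟩
      · exact Or.inl (Or.inl h)
      · exact Or.inl (Or.inr h)
      · exact Or.inr (Or.inl ⟨(none, Δ₁), hs,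
          by simp only [Prod.mk.injEq]; exact ⟨hn.symm, hd.symm⟩⟩)
      · exact Or.inr (Or.inr ⟨(none, Δ₂), hs,
          by simp only [Prod.mk.injEq]; exact ⟨hn.symm, hd.symm⟩⟩)
  | .par B s₁ s₂ => by
      have h1 := step_finite s₁
      have h2 := step_finite s₂
      apply Set.Finite.subset
        (((h1.image (fun p => (p.1, dmap (fun t => SCSP.par B t s₂) p.2))).union
          (h2.image (fun p => (p.1, dmap (fun t => SCSP.par B s₁ t) p.2)))).union
          ((h1.prod h2).image (fun pq =>
            ((none : Option C),
              dmap (fun q : SCSP C × SCSP C => SCSP.par B q.1 q.2)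
                (fun q => pq.1.2 q.1 * pq.2.2 q.2)))))
      rintro ⟨α, Δ⟩ h
      rcases step_par_inv h with ⟨Δ₁, hs, -, hd⟩ | ⟨Δ₂, hs, -, hd⟩ |
        ⟨a, Δ₁, Δ₂, hn, -, hs1, hs2, hd⟩
      · exact Or.inl (Or.inl ⟨(α, Δ₁), hs,
          by simp only [Prod.mk.injEq]; exact ⟨trivial, hd.symm⟩⟩)
      · exact Or.inl (Or.inr ⟨(α, Δ₂), hs,
          by simp only [Prod.mk.injEq]; exact ⟨trivial, hd.symm⟩⟩)
      · exact Or.inr ⟨((some a, Δ₁), (some a, Δ₂)), ⟨hs1, hs2⟩,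
          by simp only [Prod.mk.injEq]; exact ⟨hn.symm, hd.symm⟩⟩

end Inv

/-! ### The minimal result value -/

section MinV
variable {C X : Type}

/-- Deadlocked state. -/
def Stk {C : Type} (s : SCSP C) : Prop := ∀ α Δ, ¬ Step s α Δ

/-- The set of results of a state. -/
def Vse (w : C) (s : SCSP C) : Set ℝ := {r | VMem w s r}

lemma vmem_omega_eq {w : C} {s : SCSP C} (hω : ∃ Θ, Step s (some w) Θ) {r : ℝ}
    (h : VMem w s r) : r = 1 := by
  cases h with
  | succ _ => rfl
  | step f hno _ _ => obtain ⟨Θ, hΘ⟩ := hω; exact absurd hΘ (hno Θ)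
  | stuck hstk => obtain ⟨Θ, hΘ⟩ := hω; exact absurd hΘ (hstk _ Θ)

lemma vse_omega {w : C} {s : SCSP C} (hω : ∃ Θ, Step s (some w) Θ) :
    Vse w s = {1} := by
  ext r
  simp only [Vse, Set.mem_setOf_eq, Set.mem_singleton_iff]
  constructor
  · exact vmem_omega_eq hω
  · rintro rfl; obtain ⟨Θ, hΘ⟩ := hω; exact VMem.succ hΘ

lemma vmem_stuck_eq {w : C} {s : SCSP C} (hs : Stk s) {r : ℝ} (h : VMem w s r) : r = 0 := by
  cases h with
  | succ h => exact absurd h (hs _ _)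
  | step f _ h _ => exact absurd h (hs _ _)
  | stuck _ => rfl

lemma vse_stuck {w : C} {s : SCSP C} (hs : Stk s) : Vse w s = {0} := by
  ext r
  simp only [Vse, Set.mem_setOf_eq, Set.mem_singleton_iff]
  exact ⟨vmem_stuck_eq hs, fun h => h ▸ VMem.stuck hs⟩

lemma sizeS_pos {s : SCSP C} : 0 < sizeS s := by
  cases s <;> simp [sizeS]

/-- Finiteness of selection-sums. -/
lemma finsetsel (c : X → ℝ) (F : X → Set ℝ) :
    ∀ S : Finset X, (∀ x ∈ S, (F x).Finite) →
      {r | ∃ f : X → ℝ, (∀ x ∈ S, f x ∈ F x) ∧ r = ∑ x ∈ S, c x * f x}.Finite := by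
  classical
  intro S
  induction S using Finset.induction with
  | empty =>
      intro _
      apply Set.Finite.subset (Set.finite_singleton 0)
      rintro r ⟨f, -, hr⟩
      simp at hr
      simp [hr]
  | insert a S' hnot ih =>
      intro hF
      have hFa : (F a).Finite := hF a (Finset.mem_insert_self a S')
      have hprev := ih (fun x hx => hF x (Finset.mem_insert_of_mem hx))
      apply Set.Finite.subset ((hFa.prod hprev).image (fun p => c a * p.1 + p.2))
      rintro r ⟨f, hsel, hr⟩
      refine ⟨(f a, ∑ x ∈ S', c x * f x), ⟨hsel a (Finset.mem_insert_self a S'),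
        ⟨f, fun x hx => hsel x (Finset.mem_insert_of_mem hx), rfl⟩⟩, ?_⟩
      rw [hr, Finset.sum_insert hnot]

lemma sel_finite {Δ : Wt X} (hΔ : FS Δ) (F : X → Set ℝ) (hF : ∀ x ∈ dsupp Δ, (F x).Finite) :
    {r | ∃ f : X → ℝ, (∀ x ∈ dsupp Δ, f x ∈ F x) ∧ r = dexp Δ f}.Finite := by
  apply Set.Finite.subset
    (finsetsel (fun t => Δ t) F hΔ.toFinset (fun x hx => hF x (by simpa using hx)))
  rintro r ⟨f, hsel, hr⟩
  exact ⟨f, fun x hx => hsel x (by simpa using hx), by rw [hr]; exact dexp_eq_sum (by simp)⟩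

theorem v_good (w : C) : ∀ (n : ℕ) (s : SCSP C), sizeS s ≤ n →
    (Vse w s).Finite ∧ (Vse w s).Nonempty := by
  intro n
  induction n with
  | zero => intro s hs; exact absurd hs (by have := sizeS_pos (s := s); omega)
  | succ n ih =>
      intro s hs
      by_cases hω : ∃ Θ, Step s (some w) Θ
      · rw [vse_omega hω]
        exact ⟨Set.finite_singleton 1, ⟨1, rfl⟩⟩
      · by_cases hstk : Stk s
        · rw [vse_stuck hstk]
          exact ⟨Set.finite_singleton 0, ⟨0, rfl⟩⟩
        · push_neg at hω
          have hsmall : ∀ {α Δ}, Step s α Δ → ∀ t ∈ dsupp Δ, sizeS t ≤ n := by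
            intro α Δ hstep t ht
            have := step_size hstep t ht
            omega
          constructor
          · apply Set.Finite.subset
              (Set.Finite.biUnion (s := StepSet s)
                (t := fun p => {r | ∃ f : SCSP C → ℝ,
                  (∀ x ∈ dsupp p.2, f x ∈ Vse w x) ∧ r = dexp p.2 f})
                (step_finite s)
                (fun p (hp : Step s p.1 p.2) =>
                  sel_finite (step_fs hp) (Vse w)
                    (fun t ht => (ih t (hsmall hp t ht)).1)))
            intro r hr
            cases hr with
            | succ h => exact absurd h (hω _)
            | stuck h => exact absurd (fun α Δ => h α Δ) hstk
            | step f hno hstep hmem =>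
                exact Set.mem_biUnion (show ((_, _) : Option C × Wt (SCSP C)) ∈ StepSet s
                  from hstep) ⟨f, hmem, rfl⟩
          · unfold Stk at hstk
            push_neg at hstk
            obtain ⟨α, Δ, hstep⟩ := hstk
            refine ⟨dexp Δ (fun t => sInf (Vse w t)), ?_⟩
            apply VMem.step _ hω hstep
            intro t ht
            have hg := ih t (hsmall hstep t ht)
            exact hg.2.csInf_mem hg.1

/-- The minimal result value of a state. -/
def mv (w : C) (s : SCSP C) : ℝ := sInf (Vse w s)

lemma vse_finite (w : C) (s : SCSP C) : (Vse w s).Finite :=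
  (v_good w (sizeS s) s le_rfl).1

lemma vse_nonempty (w : C) (s : SCSP C) : (Vse w s).Nonempty :=
  (v_good w (sizeS s) s le_rfl).2

lemma mv_mem (w : C) (s : SCSP C) : VMem w s (mv w s) :=
  (vse_nonempty w s).csInf_mem (vse_finite w s)

lemma mv_le {w : C} {s : SCSP C} {r : ℝ} (h : VMem w s r) : mv w s ≤ r :=
  csInf_le (vse_finite w s).bddBelow h

lemma mv_stuck {w : C} {s : SCSP C} (h : Stk s) : mv w s = 0 := by
  unfold mv
  rw [vse_stuck h]
  exact csInf_singleton 0

lemma mv_omega {w : C} {s : SCSP C} (h : ∃ Θ, Step s (some w) Θ) : mv w s = 1 := by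
  unfold mv
  rw [vse_omega h]
  exact csInf_singleton 1

lemma mv_step_le {w : C} {s : SCSP C} {α : Option C} {Δ : Wt (SCSP C)}
    (hω : ∀ Θ, ¬ Step s (some w) Θ) (h : Step s α Δ) :
    mv w s ≤ dexp Δ (mv w) :=
  mv_le (VMem.step (mv w) hω h (fun t _ => mv_mem w t))

end MinV

/-! ### Renaming lemmas -/

section MapLemmas
variable {X Y A B : Type}

lemma supp_add2 {Δ Θ : Wt X} {a b : ℝ} :
    dsupp (fun x => a * Δ x + b * Θ x) ⊆ dsupp Δ ∪ dsupp Θ := by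
  intro x hx
  rw [mem_dsupp] at hx
  by_contra hc
  simp only [Set.mem_union, mem_dsupp, not_or, not_not] at hc
  exact hx (by simp [hc.1, hc.2])

lemma dmap_dirac (g : X → Y) (x : X) : dmap g (dirac x) = dirac (g x) := by
  classical
  funext y
  have hsub : dsupp (dirac x) ⊆ ↑({x} : Finset X) := by
    intro z hz
    rw [mem_dsupp] at hz
    simp only [Finset.coe_singleton, Set.mem_singleton_iff]
    by_contra h
    simp [dirac, h] at hz
  rw [dmap_eq_sum hsub, Finset.filter_singleton]
  by_cases h : g x = y
  · subst h
    simp [dirac]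
  · rw [if_neg h]
    simp only [Finset.sum_empty, dirac]
    rw [if_neg (fun hyx => h hyx.symm)]

lemma dmap_add2 {Δ Θ : Wt X} (g : X → Y) (a b : ℝ) (hΔ : FS Δ) (hΘ : FS Θ) :
    dmap g (fun x => a * Δ x + b * Θ x)
      = fun y => a * dmap g Δ y + b * dmap g Θ y := by
  classical
  funext y
  set S : Finset X := (hΔ.union hΘ).toFinset with hSdef
  have hsΔ : dsupp Δ ⊆ ↑S := by
    intro x hx; simp only [hSdef, Set.Finite.coe_toFinset]; exact Or.inl hx
  have hsΘ : dsupp Θ ⊆ ↑S := by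
    intro x hx; simp only [hSdef, Set.Finite.coe_toFinset]; exact Or.inr hx
  have hs : dsupp (fun x => a * Δ x + b * Θ x) ⊆ ↑S :=
    supp_add2.trans (Set.union_subset hsΔ hsΘ)
  rw [dmap_eq_sum hs, dmap_eq_sum hsΔ, dmap_eq_sum hsΘ, Finset.mul_sum, Finset.mul_sum,
    ← Finset.sum_add_distrib]

lemma dmap_prod_map {Δ₁ Δ₂ : Wt X} (g : X → Y) (h₁ : FS Δ₁) (h₂ : FS Δ₂) :
    (fun q : Y × Y => dmap g Δ₁ q.1 * dmap g Δ₂ q.2)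
      = dmap (Prod.map g g) (fun q : X × X => Δ₁ q.1 * Δ₂ q.2) := by
  classical
  funext ⟨y₁, y₂⟩
  have hsub : dsupp (fun q : X × X => Δ₁ q.1 * Δ₂ q.2) ⊆ ↑(h₁.toFinset ×ˢ h₂.toFinset) := by
    rintro ⟨x₁, x₂⟩ hq
    rw [mem_dsupp] at hq
    simp only [Finset.coe_product, Set.mem_prod, Set.Finite.coe_toFinset]
    exact ⟨fun h0 => hq (by simp [h0]), fun h0 => hq (by simp [h0])⟩
  rw [dmap_eq_sum hsub, dmap_eq_sum (show dsupp Δ₁ ⊆ ↑h₁.toFinset by simp),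
    dmap_eq_sum (show dsupp Δ₂ ⊆ ↑h₂.toFinset by simp), Finset.sum_mul_sum]
  rw [← Finset.sum_product' (f := fun i j => Δ₁ i * Δ₂ j)]
  apply Finset.sum_congr _ (fun _ _ => rfl)
  ext ⟨x₁, x₂⟩
  simp only [Finset.mem_filter, Finset.mem_product, Prod.map, Prod.mk.injEq]
  tauto

end MapLemmas

section MapStep
variable {A B : Type}

theorem interp_map (f : A → B) :
    ∀ P : PCSP A, (mapP f P).interp = dmap (mapS f) P.interp
  | .st s => by
      show dirac (mapS f s) = dmap (mapS f) (dirac s)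
      rw [dmap_dirac]
  | .pch p P Q => by
      have h1 := interp_map f P
      have h2 := interp_map f Q
      show (fun t => p * (mapP f P).interp t + (1 - p) * (mapP f Q).interp t) = _
      rw [h1, h2]
      exact (dmap_add2 (mapS f) p (1 - p) (interp_fs P) (interp_fs Q)).symm

theorem step_map {f : A → B} (hf : Function.Injective f) :
    ∀ {s : SCSP A} {α Δ}, Step s α Δ →
      Step (mapS f s) (Option.map f α) (dmap (mapS f) Δ) := by
  intro s α Δ h
  induction h with
  | pre a P =>
      have h2 := Step.pre (f a) (mapP f P)
      rw [interp_map] at h2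
      simpa [mapS] using h2
  | ichL P Q =>
      have h2 := Step.ichL (mapP f P) (mapP f Q)
      rw [interp_map] at h2
      simpa [mapS] using h2
  | ichR P Q =>
      have h2 := Step.ichR (mapP f P) (mapP f Q)
      rw [interp_map] at h2
      simpa [mapS] using h2
  | echL _ ih =>
      simp only [mapS, Option.map_some]
      exact Step.echL (by simpa using ih)
  | echR _ ih =>
      simp only [mapS, Option.map_some]
      exact Step.echR (by simpa using ih)
  | echTL h ih =>
      next s₁ s₂ Δ₀ =>
      have h2 := Step.echTL (s₂ := mapS f s₂) (by simpa using ih)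
      rw [dmap_comp (step_fs h)] at h2
      simp only [mapS, Option.map_none]
      rw [dmap_comp (step_fs h)]
      simp only [mapS]
      exact h2
  | echTR h ih =>
      next s₁ s₂ Δ₀ =>
      have h2 := Step.echTR (s₁ := mapS f s₁) (by simpa using ih)
      rw [dmap_comp (step_fs h)] at h2
      simp only [mapS, Option.map_none]
      rw [dmap_comp (step_fs h)]
      simp only [mapS]
      exact h2
  | parL h hc ih =>
      next X _ s₂ α _ =>
      have hc' : ∀ b, Option.map f α = some b → b ∉ f '' X := by
        rintro b hb ⟨a₁, ha₁, hfa₁⟩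
        cases α with
        | none => simp at hb
        | some a₀ =>
            simp only [Option.map_some, Option.some.injEq] at hb
            subst hb
            exact hc a₀ rfl (hf hfa₁ ▸ ha₁)
      have h2 := Step.parL (s₂ := mapS f s₂) ih hc'
      rw [dmap_comp (step_fs h)] at h2
      simp only [mapS]
      rw [dmap_comp (step_fs h)]
      simp only [mapS]
      exact h2
  | parR h hc ih =>
      next X s₁ _ α _ =>
      have hc' : ∀ b, Option.map f α = some b → b ∉ f '' X := by
        rintro b hb ⟨a₁, ha₁, hfa₁⟩
        cases α with
        | none => simp at hb
        | some a₀ =>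
            simp only [Option.map_some, Option.some.injEq] at hb
            subst hb
            exact hc a₀ rfl (hf hfa₁ ▸ ha₁)
      have h2 := Step.parR (s₁ := mapS f s₁) ih hc'
      rw [dmap_comp (step_fs h)] at h2
      simp only [mapS]
      rw [dmap_comp (step_fs h)]
      simp only [mapS]
      exact h2
  | parS hm h1 h2 ih1 ih2 =>
      next X s₁ s₂ a Δ₁ Δ₂ =>
      have h3 := Step.parS (Set.mem_image_of_mem f hm) (by simpa using ih1)
        (by simpa using ih2)
      rw [dmap_prod_map (mapS f) (step_fs h1) (step_fs h2)] at h3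
      rw [dmap_comp (fs_prod (step_fs h1) (step_fs h2))] at h3
      simp only [mapS, Option.map_none]
      rw [dmap_comp (fs_prod (step_fs h1) (step_fs h2))]
      simp only [mapS, Prod.map]
      exact h3

end MapStep

section MapInv
variable {A B : Type}

theorem step_map_inv {f : A → B} (hf : Function.Injective f) :
    ∀ {u : SCSP B} {β Δ'}, Step u β Δ' → ∀ q : SCSP A, mapS f q = u →
      ∃ α Δ, Step q α Δ ∧ β = Option.map f α ∧ Δ' = dmap (mapS f) Δ := by
  intro u β Δ' h
  induction h with
  | pre b P' =>
      intro q hq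
      cases q with
      | pre a P =>
          simp only [mapS, SCSP.pre.injEq] at hq
          exact ⟨some a, P.interp, Step.pre a P, by rw [← hq.1]; rfl,
            by rw [← hq.2, interp_map]⟩
      | nil => simp [mapS] at hq
      | ich P Q => simp [mapS] at hq
      | ech s t => simp [mapS] at hq
      | par X s t => simp [mapS] at hq
  | ichL P' Q' =>
      intro q hq
      cases q with
      | ich P Q =>
          simp only [mapS, SCSP.ich.injEq] at hq
          exact ⟨none, P.interp, Step.ichL P Q, rfl, by rw [← hq.1, interp_map]⟩
      | nil => simp [mapS] at hq
      | pre a P => simp [mapS] at hq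
      | ech s t => simp [mapS] at hq
      | par X s t => simp [mapS] at hq
  | ichR P' Q' =>
      intro q hq
      cases q with
      | ich P Q =>
          simp only [mapS, SCSP.ich.injEq] at hq
          exact ⟨none, Q.interp, Step.ichR P Q, rfl, by rw [← hq.2, interp_map]⟩
      | nil => simp [mapS] at hq
      | pre a P => simp [mapS] at hq
      | ech s t => simp [mapS] at hq
      | par X s t => simp [mapS] at hq
  | echL hs ih =>
      intro q hq
      cases q with
      | ech q₁ q₂ =>
          simp only [mapS, SCSP.ech.injEq] at hq
          obtain ⟨α, Δ, hstep, hβ, hΔ⟩ := ih q₁ hq.1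
          cases α with
          | none => simp at hβ
          | some a =>
              refine ⟨some a, Δ, Step.echL ?_, hβ, hΔ⟩
              simpa [hβ] using hstep
      | nil => simp [mapS] at hq
      | pre a P => simp [mapS] at hq
      | ich P Q => simp [mapS] at hq
      | par X s t => simp [mapS] at hq
  | echR hs ih =>
      intro q hq
      cases q with
      | ech q₁ q₂ =>
          simp only [mapS, SCSP.ech.injEq] at hq
          obtain ⟨α, Δ, hstep, hβ, hΔ⟩ := ih q₂ hq.2
          cases α with
          | none => simp at hβ
          | some a =>
              refine ⟨some a, Δ, Step.echR ?_, hβ, hΔ⟩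
              simpa [hβ] using hstep
      | nil => simp [mapS] at hq
      | pre a P => simp [mapS] at hq
      | ich P Q => simp [mapS] at hq
      | par X s t => simp [mapS] at hq
  | echTL hs ih =>
      next u₁ u₂ Δ₀ =>
      intro q hq
      cases q with
      | ech q₁ q₂ =>
          simp only [mapS, SCSP.ech.injEq] at hq
          obtain ⟨α, Δ, hstep, hβ, hΔ⟩ := ih q₁ hq.1
          cases α with
          | some a => simp at hβ
          | none =>
              refine ⟨none, dmap (fun t => SCSP.ech t q₂) Δ, Step.echTL hstep, rfl, ?_⟩
              rw [hΔ, dmap_comp (step_fs hstep), dmap_comp (step_fs hstep)]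
              simp only [mapS]
              rw [hq.2]
      | nil => simp [mapS] at hq
      | pre a P => simp [mapS] at hq
      | ich P Q => simp [mapS] at hq
      | par X s t => simp [mapS] at hq
  | echTR hs ih =>
      next u₁ u₂ Δ₀ =>
      intro q hq
      cases q with
      | ech q₁ q₂ =>
          simp only [mapS, SCSP.ech.injEq] at hq
          obtain ⟨α, Δ, hstep, hβ, hΔ⟩ := ih q₂ hq.2
          cases α with
          | some a => simp at hβ
          | none =>
              refine ⟨none, dmap (fun t => SCSP.ech q₁ t) Δ, Step.echTR hstep, rfl, ?_⟩
              rw [hΔ, dmap_comp (step_fs hstep), dmap_comp (step_fs hstep)]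
              simp only [mapS]
              rw [hq.1]
      | nil => simp [mapS] at hq
      | pre a P => simp [mapS] at hq
      | ich P Q => simp [mapS] at hq
      | par X s t => simp [mapS] at hq
  | parL hs hc ih =>
      next Bs u₁ u₂ β₀ Δ₀ =>
      intro q hq
      cases q with
      | par X q₁ q₂ =>
          simp only [mapS, SCSP.par.injEq] at hq
          obtain ⟨α, Δ, hstep, hβ, hΔ⟩ := ih q₁ hq.2.1
          refine ⟨α, dmap (fun t => SCSP.par X t q₂) Δ, Step.parL hstep ?_, hβ, ?_⟩
          · intro a ha
            intro haX
            exact hc (f a) (by rw [hβ, ha]; rfl) (hq.1 ▸ Set.mem_image_of_mem f haX)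
          · rw [hΔ, dmap_comp (step_fs hstep), dmap_comp (step_fs hstep)]
            simp only [mapS]
            rw [hq.1, hq.2.2]
      | nil => simp [mapS] at hq
      | pre a P => simp [mapS] at hq
      | ich P Q => simp [mapS] at hq
      | ech s t => simp [mapS] at hq
  | parR hs hc ih =>
      next Bs u₁ u₂ β₀ Δ₀ =>
      intro q hq
      cases q with
      | par X q₁ q₂ =>
          simp only [mapS, SCSP.par.injEq] at hq
          obtain ⟨α, Δ, hstep, hβ, hΔ⟩ := ih q₂ hq.2.2
          refine ⟨α, dmap (fun t => SCSP.par X q₁ t) Δ, Step.parR hstep ?_, hβ, ?_⟩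
          · intro a ha
            intro haX
            exact hc (f a) (by rw [hβ, ha]; rfl) (hq.1 ▸ Set.mem_image_of_mem f haX)
          · rw [hΔ, dmap_comp (step_fs hstep), dmap_comp (step_fs hstep)]
            simp only [mapS]
            rw [hq.1, hq.2.1]
      | nil => simp [mapS] at hq
      | pre a P => simp [mapS] at hq
      | ich P Q => simp [mapS] at hq
      | ech s t => simp [mapS] at hq
  | parS hm h1 h2 ih1 ih2 =>
      next Bs u₁ u₂ b Δ₁' Δ₂' =>
      intro q hq
      cases q with
      | par X q₁ q₂ =>
          simp only [mapS, SCSP.par.injEq] at hq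
          obtain ⟨a, haX, hfa⟩ : ∃ a ∈ X, f a = b := by
            have := hq.1 ▸ hm
            simpa [Set.mem_image] using this
          obtain ⟨α₁, Δ₁, hstep₁, hβ₁, hΔ₁⟩ := ih1 q₁ hq.2.1
          obtain ⟨α₂, Δ₂, hstep₂, hβ₂, hΔ₂⟩ := ih2 q₂ hq.2.2
          cases α₁ with
          | none => simp at hβ₁
          | some a₁ =>
          cases α₂ with
          | none => simp at hβ₂
          | some a₂ =>
          simp only [Option.map_some, Option.some.injEq] at hβ₁ hβ₂
          have ha₁ : a₁ = a := hf (by rw [← hβ₁, hfa])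
          have ha₂ : a₂ = a := hf (by rw [← hβ₂, hfa])
          subst ha₁
          subst ha₂
          refine ⟨none, dmap (fun p : SCSP A × SCSP A => SCSP.par X p.1 p.2)
            (fun p => Δ₁ p.1 * Δ₂ p.2), Step.parS haX hstep₁ hstep₂, rfl, ?_⟩
          rw [hΔ₁, hΔ₂, dmap_prod_map (mapS f) (step_fs hstep₁) (step_fs hstep₂),
            dmap_comp (fs_prod (step_fs hstep₁) (step_fs hstep₂)),
            dmap_comp (fs_prod (step_fs hstep₁) (step_fs hstep₂))]
          simp only [mapS, Prod.map]
          rw [hq.1]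
      | nil => simp [mapS] at hq
      | pre a P => simp [mapS] at hq
      | ich P Q => simp [mapS] at hq
      | ech s t => simp [mapS] at hq

end MapInv

/-! ### Composite states: a test in parallel with a process state -/

section Comp
variable {A : Type}

/-- The synchronization set for testing. -/
def Bn (A : Type) : Set (TAct A) := Set.range Sum.inl

/-- Composite state. -/
def cmp (t : SCSP (TAct A)) (q : SCSP A) : SCSP (TAct A) :=
  .par (Bn A) t (mapS Sum.inl q)

lemma om_not_mem_Bn : (omA : TAct A) ∉ Bn A := by
  rintro ⟨a, ha⟩
  simp [omA] at ha

lemma cmp_fwd_test {t : SCSP (TAct A)} {q : SCSP A} {γ : Option (TAct A)}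
    {Θt : Wt (SCSP (TAct A))} (h : Step t γ Θt)
    (hγ : γ = none ∨ γ = some omA) :
    Step (cmp t q) γ (dmap (fun t' => cmp t' q) Θt) :=
  Step.parL h (by
    rintro a ha
    rcases hγ with h0 | h0 <;> rw [h0] at ha
    · simp at ha
    · simp only [Option.some.injEq] at ha
      rw [← ha]
      exact om_not_mem_Bn)

lemma cmp_fwd_proc {t : SCSP (TAct A)} {q : SCSP A} {Δq : Wt (SCSP A)}
    (h : Step q none Δq) :
    Step (cmp t q) none (dmap (fun x => cmp t x) Δq) := by
  have h2 := Step.parR (B := Bn A) (s₁ := t) (step_map Sum.inl_injective h)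
    (by simp)
  rw [dmap_comp (step_fs h)] at h2
  exact h2

lemma cmp_fwd_sync {t : SCSP (TAct A)} {q : SCSP A} {a : A}
    {Θt : Wt (SCSP (TAct A))} {Δq : Wt (SCSP A)}
    (ht : Step t (some (Sum.inl a)) Θt) (hq : Step q (some a) Δq) :
    Step (cmp t q) none
      (dmap (fun p : SCSP (TAct A) × SCSP (TAct A) => SCSP.par (Bn A) p.1 p.2)
        (fun p => Θt p.1 * dmap (mapS Sum.inl) Δq p.2)) :=
  Step.parS ⟨a, rfl⟩ ht (step_map Sum.inl_injective hq)

lemma cmp_omega_inv {t : SCSP (TAct A)} {q : SCSP A} {Δc : Wt (SCSP (TAct A))}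
    (h : Step (cmp t q) (some (omA : TAct A)) Δc) :
    ∃ Θt, Step t (some omA) Θt := by
  rcases step_par_inv h with ⟨Θt, hs, -, -⟩ | ⟨Δ₂, hs, -, -⟩ | ⟨a, Δ₁, Δ₂, hn, -⟩
  · exact ⟨Θt, hs⟩
  · obtain ⟨α, Δ, -, hβ, -⟩ := step_map_inv Sum.inl_injective hs q rfl
    cases α with
    | none => simp at hβ
    | some a => simp [omA] at hβ
  · simp at hn

lemma cmp_omega_iff {t : SCSP (TAct A)} {q : SCSP A} :
    (∃ Θ, Step (cmp t q) (some (omA : TAct A)) Θ) ↔ (∃ Θ, Step t (some omA) Θ) := by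
  constructor
  · rintro ⟨Θ, h⟩
    exact cmp_omega_inv h
  · rintro ⟨Θ, h⟩
    exact ⟨_, cmp_fwd_test h (Or.inr rfl)⟩

/-- Full inversion of composite steps. -/
lemma cmp_step_inv {t : SCSP (TAct A)} {q : SCSP A} {γ : Option (TAct A)}
    {Δc : Wt (SCSP (TAct A))} (h : Step (cmp t q) γ Δc) :
    (∃ Θt, Step t γ Θt ∧ (γ = none ∨ γ = some omA) ∧
      Δc = dmap (fun t' => cmp t' q) Θt) ∨
    (∃ Δq, Step q none Δq ∧ γ = none ∧ Δc = dmap (fun x => cmp t x) Δq) ∨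
    (∃ a Θt Δq, γ = none ∧ Step t (some (Sum.inl a)) Θt ∧ Step q (some a) Δq ∧
      Δc = dmap (fun p : SCSP (TAct A) × SCSP (TAct A) => SCSP.par (Bn A) p.1 p.2)
        (fun p => Θt p.1 * dmap (mapS Sum.inl) Δq p.2)) := by
  rcases step_par_inv h with ⟨Θt, hs, hcond, hd⟩ | ⟨Δ₂, hs, hcond, hd⟩ |
    ⟨b, Δ₁, Δ₂, hn, hmem, hs1, hs2, hd⟩
  · refine Or.inl ⟨Θt, hs, ?_, hd⟩
    cases γ with
    | none => exact Or.inl rfl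
    | some b =>
        cases b with
        | inl a => exact absurd ⟨a, rfl⟩ (hcond (Sum.inl a) rfl)
        | inr x => exact Or.inr (by cases x; rfl)
  · obtain ⟨α, Δ, hstep, hβ, hΔ⟩ := step_map_inv Sum.inl_injective hs q rfl
    cases α with
    | some a =>
        exfalso
        exact hcond (Sum.inl a) (by rw [hβ]; rfl) ⟨a, rfl⟩
    | none =>
        refine Or.inr (Or.inl ⟨Δ, hstep, by simpa using hβ, ?_⟩)
        rw [hd, hΔ, dmap_comp (step_fs hstep)]
        rfl
  · obtain ⟨a, ha⟩ : ∃ a, b = Sum.inl a := by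
      obtain ⟨a, ha⟩ := hmem
      exact ⟨a, ha.symm⟩
    subst ha
    obtain ⟨α, Δ, hstep, hβ, hΔ⟩ := step_map_inv Sum.inl_injective hs2 q rfl
    cases α with
    | none => simp at hβ
    | some a₂ =>
        simp only [Option.map_some, Option.some.injEq, Sum.inl.injEq] at hβ
        subst hβ
        exact Or.inr (Or.inr ⟨a, Δ₁, Δ, hn, hs1, hstep, by rw [hd, hΔ]⟩)

/-- A composite with a deadlocked right component: only the test moves. -/
lemma cmp_stk_inv {t : SCSP (TAct A)} {q : SCSP A} (hq : Stk q) {γ : Option (TAct A)}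
    {Δc : Wt (SCSP (TAct A))} (h : Step (cmp t q) γ Δc) :
    ∃ Θt, Step t γ Θt ∧ (γ = none ∨ γ = some omA) ∧
      Δc = dmap (fun t' => cmp t' q) Θt := by
  rcases cmp_step_inv h with h0 | ⟨Δq, hs, -⟩ | ⟨a, Θt, Δq, -, -, hs, -⟩
  · exact h0
  · exact absurd hs (hq _ _)
  · exact absurd hs (hq _ _)

end Comp

section StuckEq
variable {A : Type}

lemma dmap_apply_inj {X Y : Type} {g : X → Y} (hg : Function.Injective g)
    {Δ : Wt X} (hΔ : FS Δ) (x : X) : dmap g Δ (g x) = Δ x := by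
  classical
  rw [dmap_eq_sum (show dsupp Δ ⊆ ↑hΔ.toFinset by simp), Finset.sum_filter]
  have hcong : ∀ z ∈ hΔ.toFinset, (if g z = g x then Δ z else 0) = if z = x then Δ z else 0 := by
    intro z _
    by_cases hz : z = x
    · simp [hz]
    · rw [if_neg hz, if_neg (fun h => hz (hg h))]
  rw [Finset.sum_congr rfl hcong, Finset.sum_ite_eq' hΔ.toFinset x Δ]
  by_cases hx : x ∈ hΔ.toFinset
  · simp [hx]
  · simp only [hx, if_false]
    rw [Set.Finite.mem_toFinset] at hx
    exact (not_not.mp (fun h => hx h)).symm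

lemma cmp_inj_t {t₁ t₂ : SCSP (TAct A)} {q : SCSP A} (h : cmp t₁ q = cmp t₂ q) :
    t₁ = t₂ := by
  simpa [cmp, SCSP.par.injEq] using h

theorem vmem_cmp_stk {q q' : SCSP A} (hq : Stk q) (hq' : Stk q') :
    ∀ {s : SCSP (TAct A)} {r : ℝ}, VMem omA s r → ∀ t, s = cmp t q →
      VMem omA (cmp t q') r := by
  intro s r h
  induction h with
  | succ hs =>
      intro t ht
      subst ht
      obtain ⟨Θt, hΘt⟩ := cmp_omega_inv hs
      exact VMem.succ (cmp_fwd_test hΘt (Or.inr rfl))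
  | step f hno hs hmem ih =>
      intro t ht
      subst ht
      obtain ⟨Θt, hst, hγ, hd⟩ := cmp_stk_inv hq hs
      subst hd
      have hno' : ∀ Θ, ¬ Step (cmp t q') (some omA) Θ := by
        intro Θ hΘ
        obtain ⟨Θ₁, h₁⟩ := cmp_omega_inv hΘ
        exact hno _ (cmp_fwd_test h₁ (Or.inr rfl))
      set f' : SCSP (TAct A) → ℝ := fun s =>
        if h : ∃ t'', s = cmp t'' q' then f (cmp (Classical.choose h) q) else 0 with hf'
      have hfval : ∀ t'', f' (cmp t'' q') = f (cmp t'' q) := by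
        intro t''
        have hex : ∃ t₃, cmp t'' q' = cmp t₃ q' := ⟨t'', rfl⟩
        rw [hf']
        simp only [dif_pos hex]
        congr 2
        exact (cmp_inj_t (Classical.choose_spec hex)).symm
      have hmem' : ∀ u ∈ dsupp (dmap (fun t' => cmp t' q') Θt), VMem omA u (f' u) := by
        intro u hu
        obtain ⟨t'', hgt, htne⟩ := dmap_ne_zero hu
        subst hgt
        rw [hfval]
        apply ih (cmp t'' q) _ t'' rfl
        rw [mem_dsupp, dmap_apply_inj (fun a b hab => cmp_inj_t hab) (step_fs hst)]
        exact htne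
      have hval : dexp (dmap (fun t' => cmp t' q') Θt) f'
          = dexp (dmap (fun t' => cmp t' q) Θt) f := by
        rw [dexp_dmap (step_fs hst), dexp_dmap (step_fs hst)]
        apply dexp_congr
        intro t'' _
        exact hfval t''
      have := VMem.step f' hno' (cmp_fwd_test hst hγ) hmem'
      rwa [hval] at this
  | stuck hstk =>
      intro t ht
      subst ht
      apply VMem.stuck
      intro γ Δc hstep
      obtain ⟨Θt, hst, hγ, -⟩ := cmp_stk_inv hq' hstep
      exact hstk γ _ (cmp_fwd_test hst hγ)

lemma mv_cmp_stk {q q' : SCSP A} (hq : Stk q) (hq' : Stk q') (t : SCSP (TAct A)) :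
    mv omA (cmp t q) = mv omA (cmp t q') := by
  apply le_antisymm
  · exact mv_le (vmem_cmp_stk hq' hq (mv_mem omA (cmp t q')) t rfl)
  · exact mv_le (vmem_cmp_stk hq hq' (mv_mem omA (cmp t q)) t rfl)

lemma stk_nil : Stk (SCSP.nil : SCSP A) := fun _ _ h => step_nil_inv h

end StuckEq

/-! ### Well-formed steps, failure-simulation transfer, and structural facts -/

section WfStep
variable {C : Type}

theorem interp_wf : ∀ {P : PCSP C}, PWF P →
    (∀ x, 0 ≤ P.interp x) ∧ (∀ u ∈ dsupp P.interp, SWF u)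
  | .st s, h => by
      refine ⟨dirac_nonneg s, fun u hu => ?_⟩
      rw [mem_dsupp] at hu
      unfold PCSP.interp dirac at hu
      split at hu
      · next heq => subst heq; cases h with | st h => exact h
      · simp at hu
  | .pch p P Q, h => by
      have hp : 0 < p ∧ p < 1 ∧ PWF P ∧ PWF Q := by
        cases h with | pch h1 h2 h3 h4 => exact ⟨h1, h2, h3, h4⟩
      have h1 := interp_wf hp.2.2.1
      have h2 := interp_wf hp.2.2.2
      constructor
      · intro x
        have := h1.1 x
        have := h2.1 x
        show 0 ≤ p * P.interp x + (1 - p) * Q.interp x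
        nlinarith [hp.1, hp.2.1]
      · intro u hu
        rw [mem_dsupp] at hu
        have : P.interp u ≠ 0 ∨ Q.interp u ≠ 0 := by
          by_contra hc
          push_neg at hc
          exact hu (by show p * P.interp u + (1 - p) * Q.interp u = 0; rw [hc.1, hc.2]; ring)
        rcases this with h0 | h0
        · exact h1.2 u h0
        · exact h2.2 u h0

theorem step_wf {s : SCSP C} {α : Option C} {Δ : Wt (SCSP C)}
    (hwf : SWF s) (h : Step s α Δ) :
    (∀ x, 0 ≤ Δ x) ∧ (∀ u ∈ dsupp Δ, SWF u) := by
  induction h with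
  | pre a P => cases hwf with | pre h => exact interp_wf h
  | ichL P Q => cases hwf with | ich h1 h2 => exact interp_wf h1
  | ichR P Q => cases hwf with | ich h1 h2 => exact interp_wf h2
  | echL _ ih => cases hwf with | ech h1 h2 => exact ih h1
  | echR _ ih => cases hwf with | ech h1 h2 => exact ih h2
  | echTL hs ih =>
      cases hwf with | ech h1 h2 =>
      obtain ⟨hn, hw⟩ := ih h1
      refine ⟨dmap_nonneg hn, fun u hu => ?_⟩
      obtain ⟨x, hgx, hx⟩ := dmap_ne_zero hu
      subst hgx
      exact SWF.ech (hw x hx) h2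
  | echTR hs ih =>
      cases hwf with | ech h1 h2 =>
      obtain ⟨hn, hw⟩ := ih h2
      refine ⟨dmap_nonneg hn, fun u hu => ?_⟩
      obtain ⟨x, hgx, hx⟩ := dmap_ne_zero hu
      subst hgx
      exact SWF.ech h1 (hw x hx)
  | parL hs _ ih =>
      cases hwf with | par h1 h2 =>
      obtain ⟨hn, hw⟩ := ih h1
      refine ⟨dmap_nonneg hn, fun u hu => ?_⟩
      obtain ⟨x, hgx, hx⟩ := dmap_ne_zero hu
      subst hgx
      exact SWF.par (hw x hx) h2
  | parR hs _ ih =>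
      cases hwf with | par h1 h2 =>
      obtain ⟨hn, hw⟩ := ih h2
      refine ⟨dmap_nonneg hn, fun u hu => ?_⟩
      obtain ⟨x, hgx, hx⟩ := dmap_ne_zero hu
      subst hgx
      exact SWF.par h1 (hw x hx)
  | parS _ hs1 hs2 ih1 ih2 =>
      cases hwf with | par h1 h2 =>
      obtain ⟨hn1, hw1⟩ := ih1 h1
      obtain ⟨hn2, hw2⟩ := ih2 h2
      refine ⟨dmap_nonneg (fun p => mul_nonneg (hn1 p.1) (hn2 p.2)), fun u hu => ?_⟩
      obtain ⟨⟨x, y⟩, hgx, hx⟩ := dmap_ne_zero hu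
      subst hgx
      exact SWF.par (hw1 x (fun h0 => hx (by simp [h0]))) (hw2 y (fun h0 => hx (by simp [h0])))

end WfStep

section FsimFacts
variable {C : Type}

lemma lift_mono {R S : SCSP C → Wt (SCSP C) → Prop} (h : ∀ s Θ, R s Θ → S s Θ)
    {Δ Θ : Wt (SCSP C)} (hl : Lift R Δ Θ) : Lift S Δ Θ := by
  obtain ⟨n, p, s, Φ, h1, h2, h3, h4, h5⟩ := hl
  exact ⟨n, p, s, Φ, h1, h2, h3, fun i => h (s i) (Φ i) (h4 i), h5⟩

lemma fsim_step {q : SCSP C} {Φ : Wt (SCSP C)} {α : Option C} {Δ : Wt (SCSP C)}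
    (h : fsimLE q Φ) (hs : Step q α Δ) :
    ∃ Θ', Weak α Φ Θ' ∧ Lift fsimLE Δ Θ' := by
  obtain ⟨R, hR, hqΦ⟩ := h
  obtain ⟨Θ', hw, hl⟩ := hR.1 q Φ α Δ hqΦ hs
  exact ⟨Θ', hw, lift_mono (fun s Θ hsΘ => ⟨R, hR, hsΘ⟩) hl⟩

lemma fsim_ref {q : SCSP C} {Φ : Wt (SCSP C)} {X : Set C}
    (h : fsimLE q Φ) (hr : SRefuses q X) :
    ∃ Θ', TauStar Φ Θ' ∧ DRefuses Θ' X := by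
  obtain ⟨R, hR, hqΦ⟩ := h
  exact hR.2 q Φ X hqΦ hr

/-- Genuinely decomposable weight functions. -/
def GDec (Φ : Wt (SCSP C)) : Prop :=
  ∃ (n : ℕ) (p : Fin n → ℝ) (s : Fin n → SCSP C),
    (∀ i, 0 ≤ p i) ∧ (∑ i, p i = 1) ∧ Φ = fun u => ∑ i, p i * dirac (s i) u

lemma lift_src_gdec {R : SCSP C → Wt (SCSP C) → Prop} {Δ Θ : Wt (SCSP C)}
    (h : Lift R Δ Θ) : GDec Δ := by
  obtain ⟨n, p, s, Φ, h1, h2, h3, -, -⟩ := h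
  exact ⟨n, p, s, h1, h2, h3⟩

lemma tauStar_cases {Φ Θ : Wt (SCSP C)} (h : TauStar Φ Θ) : Θ = Φ ∨ GDec Φ := by
  rcases Relation.ReflTransGen.cases_head h with h0 | ⟨Φ₁, hstep, -⟩
  · exact Or.inl h0.symm
  · exact Or.inr (lift_src_gdec hstep)

lemma weakA_gdec {Φ Θ : Wt (SCSP C)} {a : C} (h : WeakA a Φ Θ) : GDec Φ := by
  obtain ⟨Δ₁, Δ₂, hts, hsd, -⟩ := h
  rcases tauStar_cases hts with h0 | h0
  · exact h0 ▸ lift_src_gdec hsd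
  · exact h0

lemma srefuses_univ_stk {u : SCSP C} (h : SRefuses u Set.univ) : Stk u := by
  intro α Δ hs
  cases α with
  | none => exact h.1 Δ hs
  | some a => exact h.2 a trivial Δ hs

end FsimFacts

/-! ### The non-stuck part of a weight function, and the structure of simulating junk -/

section NSpart
variable {C : Type}

/-- Restriction to non-deadlocked states. -/
def NS (Φ : Wt (SCSP C)) : Wt (SCSP C) := fun u => if Stk u then 0 else Φ u

lemma supp_NS {Φ : Wt (SCSP C)} : dsupp (NS Φ) ⊆ dsupp Φ := by
  intro u hu
  rw [mem_dsupp, NS] at hu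
  rw [mem_dsupp]
  intro h0
  apply hu
  split <;> simp [h0]

lemma ns_combo {n : ℕ} {p : Fin n → ℝ} {Φ : Fin n → Wt (SCSP C)} :
    NS (fun u => ∑ i, p i * Φ i u) = fun u => ∑ i, p i * NS (Φ i) u := by
  classical
  funext u
  unfold NS
  by_cases h : Stk u
  · simp only [h, if_true]
    symm
    apply Finset.sum_eq_zero
    intro i _
    simp
  · simp only [h, if_false]

/-- The key structural predicate: finite, non-negative sub-probability non-stuck part. -/
def CFp (Φ : Wt (SCSP C)) : Prop :=
  FS (NS Φ) ∧ (∀ u, 0 ≤ NS Φ u) ∧ mass (NS Φ) ≤ 1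

lemma mass_mono {C' : Type} {Δ Θ : Wt C'} (hΔ : FS Δ) (hΘ : FS Θ)
    (hle : ∀ x, Δ x ≤ Θ x) : mass Δ ≤ mass Θ := by
  classical
  set S := (hΔ.union hΘ).toFinset with hSdef
  have h1 : dsupp Δ ⊆ ↑S := by
    intro x hx; simp only [hSdef, Set.Finite.coe_toFinset]; exact Or.inl hx
  have h2 : dsupp Θ ⊆ ↑S := by
    intro x hx; simp only [hSdef, Set.Finite.coe_toFinset]; exact Or.inr hx
  rw [mass_eq_sum h1, mass_eq_sum h2]
  exact Finset.sum_le_sum (fun x _ => hle x)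

lemma ns_nonneg_of {Φ : Wt (SCSP C)} (h : ∀ u, 0 ≤ Φ u) (u : SCSP C) : 0 ≤ NS Φ u := by
  unfold NS
  split
  · exact le_refl _
  · exact h u

lemma ns_le_of {Φ : Wt (SCSP C)} (h : ∀ u, 0 ≤ Φ u) (u : SCSP C) : NS Φ u ≤ Φ u := by
  unfold NS
  split
  · exact h u
  · exact le_refl _

lemma fs_zero : FS (fun _ : C => (0 : ℝ)) := by
  apply Set.finite_empty.subset
  intro u hu
  rw [mem_dsupp] at hu
  exact hu rfl

lemma mass_zero : mass (fun _ : C => (0 : ℝ)) = 0 := finsum_zero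

lemma cfp_of_gdec {Φ : Wt (SCSP C)} (h : GDec Φ) : CFp Φ := by
  obtain ⟨n, p, s, hp, hps, hΦ⟩ := h
  have hnn : ∀ u, 0 ≤ Φ u := by
    intro u
    rw [hΦ]
    exact Finset.sum_nonneg fun i _ => mul_nonneg (hp i) (dirac_nonneg _ _)
  have hfs : FS Φ := by
    rw [hΦ]
    exact fs_combo (fun i _ => fs_dirac (s i))
  have hm : mass Φ = 1 := by
    rw [hΦ, mass_combo (fun i _ => fs_dirac (s i))]
    simp only [mass_dirac, mul_one]
    exact hps
  refine ⟨hfs.subset supp_NS, ns_nonneg_of hnn, ?_⟩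
  calc mass (NS Φ) ≤ mass Φ := mass_mono (hfs.subset supp_NS) hfs (ns_le_of hnn)
    _ = 1 := hm

theorem fsim_cfp : ∀ (n : ℕ) (q : SCSP C) (Φ : Wt (SCSP C)), sizeS q ≤ n →
    fsimLE q Φ → CFp Φ := by
  intro n
  induction n with
  | zero => intro q Φ hq; exact absurd hq (by have := sizeS_pos (s := q); omega)
  | succ n ih =>
      intro q Φ hq hsim
      by_cases hg : GDec Φ
      · exact cfp_of_gdec hg
      by_cases hstk : Stk q
      · -- q deadlocked: Φ is supported on deadlocked states
        obtain ⟨Θ', hts, hdr⟩ := fsim_ref (X := Set.univ) hsim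
          ⟨fun Δ h => hstk none Δ h, fun a _ Δ h => hstk (some a) Δ h⟩
        rcases tauStar_cases hts with h0 | h0
        · rw [h0] at hdr
          have hz : NS Φ = fun _ => (0 : ℝ) := by
            funext u
            unfold NS
            split
            · rfl
            · next hu =>
                by_contra h0
                exact hu (srefuses_univ_stk (hdr u h0))
          show FS (NS Φ) ∧ (∀ u, 0 ≤ NS Φ u) ∧ mass (NS Φ) ≤ 1
          rw [hz]
          exact ⟨fs_zero, fun u => le_refl _, by rw [mass_zero]; norm_num⟩
        · exact absurd h0 hg
      · -- q has a step
        have hstep : ∃ α Δx, Step q α Δx := by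
          unfold Stk at hstk
          push_neg at hstk
          obtain ⟨α, Δ, h⟩ := hstk
          exact ⟨α, Δ, h⟩
        obtain ⟨α, Δx, hs⟩ := hstep
        cases α with
        | some a =>
            obtain ⟨Θ', hw, -⟩ := fsim_step hsim hs
            exact absurd (weakA_gdec hw) hg
        | none =>
            obtain ⟨Θ', hw, hl⟩ := fsim_step hsim hs
            rcases tauStar_cases (hw : TauStar Φ Θ') with h0 | h0
            on_goal 2 => exact absurd h0 hg
            subst h0
            obtain ⟨m, p, x, Ψ, hp, hps, hΔ, hrel, hΦeq⟩ := hl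
            have hxsupp : ∀ i, p i ≠ 0 → x i ∈ dsupp Δx := by
              intro i hpi
              rw [mem_dsupp, hΔ]
              intro h0
              have h0' : ∑ j, p j * dirac (x j) (x i) = 0 := h0
              have hle : p i ≤ ∑ j, p j * dirac (x j) (x i) := by
                have := Finset.single_le_sum
                  (f := fun j => p j * dirac (x j) (x i))
                  (fun j _ => mul_nonneg (hp j) (dirac_nonneg _ _))
                  (Finset.mem_univ i)
                simpa [dirac] using this
              rw [h0'] at hle
              have : 0 < p i := lt_of_le_of_ne (hp i) (Ne.symm hpi)
              linarith
            have hcfp : ∀ i, p i ≠ 0 → CFp (Ψ i) := by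
              intro i hpi
              apply ih (x i) (Ψ i) _ (hrel i)
              have := step_size hs (x i) (hxsupp i hpi)
              omega
            rw [hΦeq]
            show FS (NS _) ∧ (∀ u, 0 ≤ NS _ u) ∧ mass (NS _) ≤ 1
            rw [ns_combo]
            refine ⟨fs_combo (fun i hpi => (hcfp i hpi).1), ?_, ?_⟩
            · intro u
              apply Finset.sum_nonneg
              intro i _
              by_cases hpi : p i = 0
              · simp [hpi]
              · exact mul_nonneg (hp i) ((hcfp i hpi).2.1 u)
            · rw [mass_combo (fun i hpi => (hcfp i hpi).1)]
              calc ∑ i, p i * mass (NS (Ψ i)) ≤ ∑ i, p i * 1 := by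
                    apply Finset.sum_le_sum
                    intro i _
                    by_cases hpi : p i = 0
                    · simp [hpi]
                    · exact mul_le_mul_of_nonneg_left (hcfp i hpi).2.2 (hp i)
                _ = 1 := by simp [hps]

end NSpart

section MoreDexp
variable {X Y : Type}

lemma dexp_swap {Δ : Wt X} {Θ : Wt Y} (hΔ : FS Δ) (hΘ : FS Θ) (h : X → Y → ℝ) :
    dexp Δ (fun x => dexp Θ (fun y => h x y)) = dexp Θ (fun y => dexp Δ (fun x => h x y)) := by
  classical
  rw [dexp_eq_sum (show dsupp Δ ⊆ ↑hΔ.toFinset by simp),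
    dexp_eq_sum (show dsupp Θ ⊆ ↑hΘ.toFinset by simp)]
  have h1 : ∀ x ∈ hΔ.toFinset, Δ x * dexp Θ (fun y => h x y)
      = ∑ y ∈ hΘ.toFinset, Δ x * (Θ y * h x y) := by
    intro x _
    rw [dexp_eq_sum (show dsupp Θ ⊆ ↑hΘ.toFinset by simp), Finset.mul_sum]
  have h2 : ∀ y ∈ hΘ.toFinset, Θ y * dexp Δ (fun x => h x y)
      = ∑ x ∈ hΔ.toFinset, Θ y * (Δ x * h x y) := by
    intro y _
    rw [dexp_eq_sum (show dsupp Δ ⊆ ↑hΔ.toFinset by simp), Finset.mul_sum]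
  rw [Finset.sum_congr rfl h1, Finset.sum_congr rfl h2, Finset.sum_comm]
  apply Finset.sum_congr rfl
  intro y _
  apply Finset.sum_congr rfl
  intro x _
  ring

lemma dexp_fun_combo {Δ : Wt X} (hΔ : FS Δ) {n : ℕ} (p : Fin n → ℝ) (G : Fin n → X → ℝ) :
    dexp Δ (fun x => ∑ i, p i * G i x) = ∑ i, p i * dexp Δ (G i) := by
  classical
  rw [dexp_eq_sum (show dsupp Δ ⊆ ↑hΔ.toFinset by simp)]
  have h1 : ∀ x ∈ hΔ.toFinset, Δ x * (∑ i, p i * G i x) = ∑ i, p i * (Δ x * G i x) := by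
    intro x _
    rw [Finset.mul_sum]
    exact Finset.sum_congr rfl fun i _ => by ring
  rw [Finset.sum_congr rfl h1, Finset.sum_comm]
  apply Finset.sum_congr rfl
  intro i _
  rw [dexp_eq_sum (show dsupp Δ ⊆ ↑hΔ.toFinset by simp), Finset.mul_sum]

lemma dexp_fun_add_smul {Δ : Wt X} (hΔ : FS Δ) (F G : X → ℝ) (c : ℝ) :
    dexp Δ (fun x => F x + c * G x) = dexp Δ F + c * dexp Δ G := by
  classical
  rw [dexp_eq_sum (show dsupp Δ ⊆ ↑hΔ.toFinset by simp),
    dexp_eq_sum (show dsupp Δ ⊆ ↑hΔ.toFinset by simp),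
    dexp_eq_sum (show dsupp Δ ⊆ ↑hΔ.toFinset by simp), Finset.mul_sum,
    ← Finset.sum_add_distrib]
  exact Finset.sum_congr rfl fun x _ => by ring

lemma gdec_pos {n : ℕ} {p : Fin n → ℝ} {x : Fin n → X} (hp : ∀ i, 0 ≤ p i)
    {i : Fin n} (hpi : p i ≠ 0) :
    0 < ∑ j, p j * dirac (x j) (x i) := by
  have hle : p i ≤ ∑ j, p j * dirac (x j) (x i) := by
    have := Finset.single_le_sum
      (f := fun j => p j * dirac (x j) (x i))
      (fun j _ => mul_nonneg (hp j) (dirac_nonneg _ _)) (Finset.mem_univ i)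
    simpa [dirac] using this
  have : 0 < p i := lt_of_le_of_ne (hp i) (Ne.symm hpi)
  linarith

lemma dexp_gdec {n : ℕ} (p : Fin n → ℝ) (x : Fin n → X) (g : X → ℝ) :
    dexp (fun u => ∑ i, p i * dirac (x i) u) g = ∑ i, p i * g (x i) := by
  rw [dexp_combo (fun i _ => fs_dirac (x i))]
  exact Finset.sum_congr rfl fun i _ => by rw [dexp_dirac]

lemma dexp_pt_add {Δ Θ : Wt X} (hΔ : FS Δ) (hΘ : FS Θ) (g : X → ℝ)
    {Ξ : Wt X} (hΞ : ∀ x, Ξ x = Δ x + Θ x) :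
    dexp Ξ g = dexp Δ g + dexp Θ g := by
  have h2 : Ξ = fun x => (1:ℝ) * Δ x + (1:ℝ) * Θ x := by
    funext x; rw [hΞ]; ring
  rw [h2, dexp_add2 1 1 hΔ hΘ, one_mul, one_mul]

end MoreDexp

/-! ### The expected-minimum functional E -/

section Efun
variable {A : Type}

/-- Expected minimal value of the composite against test state `t`. -/
def Mt (t : SCSP (TAct A)) (Φ : Wt (SCSP A)) : ℝ :=
  dexp Φ (fun u => mv omA (cmp t u))

/-- Deadlock value of the test state `t`. -/
def Dv (t : SCSP (TAct A)) : ℝ := mv omA (cmp t SCSP.nil)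

/-- The robust expected-minimum functional. -/
def Ee (t : SCSP (TAct A)) (Φ : Wt (SCSP A)) : ℝ :=
  Mt t (NS Φ) + (1 - mass (NS Φ)) * Dv t

/-- The deadlocked part of a weight function. -/
def STp (Φ : Wt (SCSP A)) : Wt (SCSP A) := fun u => if Stk u then Φ u else 0

lemma ns_add_st (Φ : Wt (SCSP A)) (u : SCSP A) : Φ u = NS Φ u + STp Φ u := by
  unfold NS STp
  split <;> ring

lemma supp_STp {Φ : Wt (SCSP A)} : dsupp (STp Φ) ⊆ dsupp Φ := by
  intro u hu
  rw [mem_dsupp, STp] at hu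
  rw [mem_dsupp]
  intro h0
  apply hu
  split <;> simp [h0]

lemma mv_cmp_stk_nil {t : SCSP (TAct A)} {u : SCSP A} (hu : Stk u) :
    mv omA (cmp t u) = Dv t := mv_cmp_stk hu stk_nil t

lemma cmp_noomega {t : SCSP (TAct A)} (h : ∀ Θ, ¬ Step t (some (omA : TAct A)) Θ)
    (q : SCSP A) : ∀ Θ, ¬ Step (cmp t q) (some (omA : TAct A)) Θ := by
  intro Θ hc
  obtain ⟨Θt, hΘt⟩ := cmp_omega_inv hc
  exact h Θt hΘt

/-- `Ee` agrees with `Mt` on finitely-supported mass-one weight functions. -/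
lemma ee_eq_mt {t : SCSP (TAct A)} {Φ : Wt (SCSP A)} (hfs : FS Φ) (hm : mass Φ = 1) :
    Ee t Φ = Mt t Φ := by
  have hns : FS (NS Φ) := hfs.subset supp_NS
  have hst : FS (STp Φ) := hfs.subset supp_STp
  have h1 : Mt t Φ = Mt t (NS Φ) + dexp (STp Φ) (fun u => mv omA (cmp t u)) := by
    unfold Mt
    exact dexp_pt_add hns hst _ (ns_add_st Φ)
  have h2 : dexp (STp Φ) (fun u => mv omA (cmp t u)) = mass (STp Φ) * Dv t := by
    rw [dexp_congr (g := fun _ => Dv t) (fun u hu => ?_), dexp_const hst]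
    have hstk : Stk u := by
      rw [mem_dsupp, STp] at hu
      by_contra hc
      simp only [hc, if_false] at hu
      exact hu rfl
    exact mv_cmp_stk_nil hstk
  have h3 : mass Φ = mass (NS Φ) + mass (STp Φ) := by
    rw [mass_eq_dexp_one, mass_eq_dexp_one, mass_eq_dexp_one]
    exact dexp_pt_add hns hst (fun _ => (1:ℝ)) (ns_add_st Φ)
  have h4 : mass (STp Φ) = 1 - mass (NS Φ) := by rw [← hm, h3]; ring
  unfold Ee
  rw [h1, h2, h4]

/-- `Ee` equals 1 whenever the test is success-enabled. -/
lemma ee_omega {t : SCSP (TAct A)} {Φ : Wt (SCSP A)} (hns : FS (NS Φ))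
    (hω : ∃ Θ, Step t (some (omA : TAct A)) Θ) : Ee t Φ = 1 := by
  have hone : ∀ u : SCSP A, mv omA (cmp t u) = 1 := by
    intro u
    exact mv_omega (cmp_omega_iff.mpr hω)
  unfold Ee Mt Dv
  rw [dexp_congr (g := fun _ => (1:ℝ)) (fun u _ => hone u), dexp_const hns, hone]
  ring

/-- Linearity of `Ee` over lift decompositions. -/
lemma ee_split {t : SCSP (TAct A)} {n : ℕ} {p : Fin n → ℝ} {Φ : Fin n → Wt (SCSP A)}
    (hp : ∀ i, 0 ≤ p i) (hps : ∑ i, p i = 1)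
    (hcfp : ∀ i, p i ≠ 0 → CFp (Φ i)) :
    Ee t (fun u => ∑ i, p i * Φ i u) = ∑ i, p i * Ee t (Φ i) := by
  unfold Ee Mt
  rw [ns_combo, dexp_combo (fun i hpi => (hcfp i hpi).1),
    mass_combo (fun i hpi => (hcfp i hpi).1)]
  have hexp : ∑ i, p i * (dexp (NS (Φ i)) (fun u => mv omA (cmp t u))
        + (1 - mass (NS (Φ i))) * Dv t)
      = ∑ i, (p i * dexp (NS (Φ i)) (fun u => mv omA (cmp t u))
        + (p i - p i * mass (NS (Φ i))) * Dv t) :=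
    Finset.sum_congr rfl (fun i _ => by ring)
  rw [hexp, Finset.sum_add_distrib, ← Finset.sum_mul, Finset.sum_sub_distrib, hps]

end Efun

section StepIneq
variable {A : Type}

/-- Process τ-move bound. -/
lemma mv_proc_le {t : SCSP (TAct A)} {q : SCSP A} {Ψ : Wt (SCSP A)}
    (hω : ∀ Θ, ¬ Step t (some (omA : TAct A)) Θ) (h : Step q none Ψ) :
    mv omA (cmp t q) ≤ Mt t Ψ := by
  have := mv_step_le (cmp_noomega hω q) (cmp_fwd_proc (t := t) h)
  rwa [dexp_dmap (step_fs h)] at this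

/-- Test move bound (τ moves of the test). -/
lemma mv_test_le {t : SCSP (TAct A)} {q : SCSP A} {Θt : Wt (SCSP (TAct A))}
    (hω : ∀ Θ, ¬ Step t (some (omA : TAct A)) Θ) (h : Step t none Θt) :
    mv omA (cmp t q) ≤ dexp Θt (fun t' => mv omA (cmp t' q)) := by
  have := mv_step_le (cmp_noomega hω q) (cmp_fwd_test (q := q) h (Or.inl rfl))
  rwa [dexp_dmap (step_fs h)] at this

/-- Synchronization bound. -/
lemma mv_sync_le {t : SCSP (TAct A)} {q : SCSP A} {a : A}
    {Θt : Wt (SCSP (TAct A))} {Ψ : Wt (SCSP A)}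
    (hω : ∀ Θ, ¬ Step t (some (omA : TAct A)) Θ)
    (ht : Step t (some (Sum.inl a)) Θt) (hq : Step q (some a) Ψ) :
    mv omA (cmp t q) ≤ dexp Θt (fun t' => Mt t' Ψ) := by
  have := mv_step_le (cmp_noomega hω q) (cmp_fwd_sync ht hq)
  rwa [dexp_dmap (fs_prod (step_fs ht) (fs_dmap (step_fs hq))),
    dexp_prod (step_fs ht) (fs_dmap (step_fs hq)),
    show (fun t' => dexp (dmap (mapS Sum.inl) Ψ)
        (fun v => mv omA (SCSP.par (Bn A) t' v)))
      = fun t' => Mt t' Ψ by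
        funext t'
        rw [dexp_dmap (step_fs hq)]
        rfl] at this

/-- One lifted τ̂-step is monotone for `Ee`. -/
lemma ee_tau_step {t : SCSP (TAct A)} {Φ Φ' : Wt (SCSP A)}
    (hω : ∀ Θ, ¬ Step t (some (omA : TAct A)) Θ)
    (h : Lift stepTauHat Φ Φ') :
    Ee t Φ ≤ Ee t Φ' ∧ FS Φ' ∧ mass Φ' = 1 := by
  obtain ⟨n, p, x, Ψ, hp, hps, hΦ, hrel, hΦ'⟩ := h
  have hfsi : ∀ i, p i ≠ 0 → FS (Ψ i) := by
    intro i _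
    rcases hrel i with hstep | hd
    · exact step_fs hstep
    · rw [hd]; exact fs_dirac _
  have hmi : ∀ i, p i ≠ 0 → mass (Ψ i) = 1 := by
    intro i _
    rcases hrel i with hstep | hd
    · exact step_mass hstep
    · rw [hd]; exact mass_dirac _
  have hfsΦ : FS Φ := by rw [hΦ]; exact fs_combo (fun i _ => fs_dirac _)
  have hmΦ : mass Φ = 1 := by
    rw [hΦ, mass_combo (fun i _ => fs_dirac _)]
    simp only [mass_dirac, mul_one]
    exact hps
  have hfs' : FS Φ' := by rw [hΦ']; exact fs_combo hfsi
  have hm' : mass Φ' = 1 := by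
    rw [hΦ', mass_combo hfsi, ← hps]
    apply Finset.sum_congr rfl
    intro i _
    by_cases hpi : p i = 0
    · simp [hpi]
    · rw [hmi i hpi, mul_one]
  refine ⟨?_, hfs', hm'⟩
  rw [ee_eq_mt hfsΦ hmΦ, ee_eq_mt hfs' hm']
  unfold Mt
  rw [hΦ, dexp_gdec, hΦ', dexp_combo hfsi]
  apply Finset.sum_le_sum
  intro i _
  by_cases hpi : p i = 0
  · simp [hpi]
  apply mul_le_mul_of_nonneg_left _ (hp i)
  rcases hrel i with hstep | hd
  · exact mv_proc_le hω hstep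
  · rw [hd, dexp_dirac]

/-- `Ee` is monotone along weak τ-moves. -/
lemma ee_tau_star {t : SCSP (TAct A)} {Φ Θ : Wt (SCSP A)}
    (hω : ∀ Θ₀, ¬ Step t (some (omA : TAct A)) Θ₀)
    (h : TauStar Φ Θ) (hns : FS (NS Φ)) :
    Ee t Φ ≤ Ee t Θ ∧ FS (NS Θ) := by
  induction h using Relation.ReflTransGen.head_induction_on with
  | refl => exact ⟨le_refl _, hns⟩
  | head hstep htail ih =>
      next c b =>
      have h1 := ee_tau_step hω hstep
      have h2 := ih (h1.2.1.subset supp_NS)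
      exact ⟨le_trans h1.1 h2.1, h2.2⟩

end StepIneq

/-! ### The key simulation bound -/

section Key
variable {A : Type}

theorem key_bound : ∀ {s : SCSP (TAct A)} {r : ℝ}, VMem omA s r →
    ∀ (t : SCSP (TAct A)) (q : SCSP A) (Φ : Wt (SCSP A)),
      s = cmp t q → SWF t → fsimLE q Φ → Ee t Φ ≤ r := by
  intro s r h
  induction h with
  | succ hs =>
      intro t q Φ hteq hwf hsim
      subst hteq
      have hω : ∃ Θ, Step t (some (omA : TAct A)) Θ := cmp_omega_inv hs
      rw [ee_omega (fsim_cfp (sizeS q) q Φ le_rfl hsim).1 hω]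
  | stuck hstk =>
      intro t q Φ hteq hwf hsim
      subst hteq
      have hωt : ∀ Θ, ¬ Step t (some (omA : TAct A)) Θ :=
        fun Θ h0 => hstk _ _ (cmp_fwd_test h0 (Or.inr rfl))
      have hτt : ∀ Θ, ¬ Step t none Θ :=
        fun Θ h0 => hstk _ _ (cmp_fwd_test h0 (Or.inl rfl))
      have hcfp := fsim_cfp (sizeS q) q Φ le_rfl hsim
      have href : SRefuses q {a : A | ∃ Θ, Step t (some (Sum.inl a)) Θ} := by
        constructor
        · exact fun Δ h0 => hstk _ _ (cmp_fwd_proc h0)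
        · rintro a ⟨Θt, hΘt⟩ Δ h0
          exact hstk _ _ (cmp_fwd_sync hΘt h0)
      obtain ⟨Θ', hts, hdr⟩ := fsim_ref hsim href
      obtain ⟨hEle, hnsΘ'⟩ := ee_tau_star hωt hts hcfp.1
      have hzero : ∀ u ∈ dsupp (NS Θ'), mv omA (cmp t u) = (0:ℝ) := by
        intro u hu
        have hsr := hdr u (supp_NS hu)
        apply mv_stuck
        intro γ Δc hstep
        rcases cmp_step_inv hstep with ⟨Θt, hst, hγ, -⟩ | ⟨Δq, hsq, -, -⟩ |
          ⟨a, Θt, Δq, -, hst, hsq, -⟩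
        · rcases hγ with h0 | h0 <;> subst h0
          · exact hτt _ hst
          · exact hωt _ hst
        · exact hsr.1 _ hsq
        · exact hsr.2 a ⟨Θt, hst⟩ _ hsq
      have hDv : Dv t = 0 := by
        apply mv_stuck
        intro γ Δc hstep
        rcases cmp_step_inv hstep with ⟨Θt, hst, hγ, -⟩ | ⟨Δq, hsq, -, -⟩ |
          ⟨a, Θt, Δq, -, hst, hsq, -⟩
        · rcases hγ with h0 | h0 <;> subst h0
          · exact hτt _ hst
          · exact hωt _ hst
        · exact step_nil_inv hsq
        · exact step_nil_inv hsq
      have hEΘ' : Ee t Θ' = 0 := by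
        unfold Ee Mt
        rw [dexp_congr (g := fun _ => (0:ℝ)) hzero, dexp_const hnsΘ', hDv]
        ring
      linarith [hEle]
  | step f hno hstep hsel ih =>
      intro t q Φ hteq hwf hsim
      subst hteq
      have hωt : ∀ Θ, ¬ Step t (some (omA : TAct A)) Θ :=
        fun Θ h0 => hno _ (cmp_fwd_test h0 (Or.inr rfl))
      have hcfp := fsim_cfp (sizeS q) q Φ le_rfl hsim
      rcases cmp_step_inv hstep with ⟨Θt, hst, hγ, hd⟩ | ⟨Δq, hsq, hγ, hd⟩ |
        ⟨a, Θt, Δq, hγ, hst, hsq, hd⟩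
      · -- the test moves on its own
        rcases hγ with h0 | h0
        on_goal 2 => exact absurd (h0 ▸ hst) (hωt Θt)
        subst h0
        subst hd
        have hfsΘt := step_fs hst
        have hwfs := step_wf hwf hst
        rw [dexp_dmap hfsΘt]
        have h1m : (0:ℝ) ≤ 1 - mass (NS Φ) := by linarith [hcfp.2.2]
        have hb1 : Ee t Φ ≤ dexp Θt (fun t' => Ee t' Φ) := by
          unfold Ee Mt
          rw [dexp_fun_add_smul hfsΘt _ _ _]
          apply add_le_add
          · calc dexp (NS Φ) (fun u => mv omA (cmp t u))
                ≤ dexp (NS Φ) (fun u => dexp Θt (fun t' => mv omA (cmp t' u))) :=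
                  dexp_mono hcfp.1 (fun u _ => hcfp.2.1 u) (fun u _ => mv_test_le hωt hst)
              _ = dexp Θt (fun t' => dexp (NS Φ) (fun u => mv omA (cmp t' u))) :=
                  dexp_swap hcfp.1 hfsΘt _
          · exact mul_le_mul_of_nonneg_left (mv_test_le hωt hst) h1m
        refine le_trans hb1 (dexp_mono hfsΘt (fun t' _ => hwfs.1 t') ?_)
        intro t' ht'
        apply ih (cmp t' q) _ t' q Φ rfl (hwfs.2 t' ht') hsim
        rw [mem_dsupp]
        have hpos : 0 < Θt t' := lt_of_le_of_ne (hwfs.1 t') (Ne.symm ht')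
        have := le_dmap_self (g := fun t' => cmp t' q) hfsΘt hwfs.1 t'
        exact ne_of_gt (lt_of_lt_of_le hpos this)
      · -- the process makes an internal move
        subst hd
        obtain ⟨Θ₁, hw, hl⟩ := fsim_step hsim hsq
        obtain ⟨m, p, x, Ψ, hp, hps, hΔq, hrel, hΘeq⟩ := hl
        have hcfpi : ∀ i, p i ≠ 0 → CFp (Ψ i) :=
          fun i _ => fsim_cfp (sizeS (x i)) _ _ le_rfl (hrel i)
        have h1 : Ee t Φ ≤ Ee t Θ₁ := (ee_tau_star hωt hw hcfp.1).1
        have h2 : Ee t Θ₁ = ∑ i, p i * Ee t (Ψ i) := by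
          rw [hΘeq]
          exact ee_split hp hps hcfpi
        have hnnΔq : ∀ u, 0 ≤ Δq u := by
          intro u
          rw [hΔq]
          exact Finset.sum_nonneg fun i _ => mul_nonneg (hp i) (dirac_nonneg _ _)
        have h3 : ∀ i, p i ≠ 0 → Ee t (Ψ i) ≤ f (cmp t (x i)) := by
          intro i hpi
          apply ih (cmp t (x i)) _ t (x i) (Ψ i) rfl hwf (hrel i)
          rw [mem_dsupp]
          have hpos : 0 < Δq (x i) := by rw [hΔq]; exact gdec_pos hp hpi
          have := le_dmap_self (g := fun v => cmp t v) (step_fs hsq) hnnΔq (x i)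
          exact ne_of_gt (lt_of_lt_of_le hpos this)
        rw [dexp_dmap (step_fs hsq), hΔq, dexp_gdec]
        calc Ee t Φ ≤ ∑ i, p i * Ee t (Ψ i) := h1.trans_eq h2
          _ ≤ ∑ i, p i * f (cmp t (x i)) := by
              apply Finset.sum_le_sum
              intro i _
              by_cases hpi : p i = 0
              · simp [hpi]
              · exact mul_le_mul_of_nonneg_left (h3 i hpi) (hp i)
      · -- synchronization
        subst hd
        obtain ⟨Θfin, hw, hl⟩ := fsim_step hsim hsq
        obtain ⟨Φ₁, Φ₂, hts1, hsd, hts2⟩ := hw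
        obtain ⟨m, p, x, Ψ', hp, hps, hΔq, hrel, hΘeq⟩ := hl
        obtain ⟨k, rr, u, Ψ, hr, hrs, hΦ₁, hrelstep, hΦ₂⟩ := hsd
        have hfsΘt := step_fs hst
        have hwfs := step_wf hwf hst
        have hnnΔq : ∀ v, 0 ≤ Δq v := by
          intro v
          rw [hΔq]
          exact Finset.sum_nonneg fun i _ => mul_nonneg (hp i) (dirac_nonneg _ _)
        have hA : Ee t Φ ≤ Ee t Φ₁ := (ee_tau_star hωt hts1 hcfp.1).1
        have hfsj : ∀ j, rr j ≠ 0 → FS (Ψ j) := fun j _ => step_fs (hrelstep j)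
        have hfsΦ₂ : FS Φ₂ := by rw [hΦ₂]; exact fs_combo hfsj
        have hmΦ₂ : mass Φ₂ = 1 := by
          rw [hΦ₂, mass_combo hfsj, ← hrs]
          apply Finset.sum_congr rfl
          intro j _
          by_cases hrj : rr j = 0
          · simp [hrj]
          · rw [step_mass (hrelstep j), mul_one]
        have hfsΦ₁ : FS Φ₁ := by rw [hΦ₁]; exact fs_combo (fun j _ => fs_dirac _)
        have hmΦ₁ : mass Φ₁ = 1 := by
          rw [hΦ₁, mass_combo (fun j _ => fs_dirac _)]
          simp only [mass_dirac, mul_one]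
          exact hrs
        have hB : Ee t Φ₁ ≤ dexp Θt (fun t' => Mt t' Φ₂) := by
          rw [ee_eq_mt hfsΦ₁ hmΦ₁]
          unfold Mt
          rw [hΦ₁, dexp_gdec]
          calc ∑ j, rr j * mv omA (cmp t (u j))
              ≤ ∑ j, rr j * dexp Θt (fun t' => Mt t' (Ψ j)) := by
                apply Finset.sum_le_sum
                intro j _
                by_cases hrj : rr j = 0
                · simp [hrj]
                · exact mul_le_mul_of_nonneg_left
                    (mv_sync_le hωt hst (hrelstep j)) (hr j)
            _ = dexp Θt (fun t' => ∑ j, rr j * Mt t' (Ψ j)) :=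
                (dexp_fun_combo hfsΘt rr _).symm
            _ = dexp Θt (fun t' => Mt t' Φ₂) := by
                apply dexp_congr
                intro t' _
                show ∑ j, rr j * Mt t' (Ψ j) = Mt t' Φ₂
                unfold Mt
                rw [hΦ₂, dexp_combo hfsj]
        have hmemD : ∀ t', Θt t' ≠ 0 → ∀ i, p i ≠ 0 →
            cmp t' (x i) ∈ dsupp (dmap
              (fun pr : SCSP (TAct A) × SCSP (TAct A) => SCSP.par (Bn A) pr.1 pr.2)
              (fun pr => Θt pr.1 * dmap (mapS Sum.inl) Δq pr.2)) := by
          intro t' ht' i hpi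
          rw [mem_dsupp]
          have hposΘt : 0 < Θt t' := lt_of_le_of_ne (hwfs.1 t') (Ne.symm ht')
          have hposΔq : 0 < Δq (x i) := by rw [hΔq]; exact gdec_pos hp hpi
          have hnnprod : ∀ pr : SCSP (TAct A) × SCSP (TAct A),
              0 ≤ Θt pr.1 * dmap (mapS Sum.inl) Δq pr.2 :=
            fun pr => mul_nonneg (hwfs.1 pr.1) (dmap_nonneg hnnΔq pr.2)
          have h5 := le_dmap_self
            (g := fun pr : SCSP (TAct A) × SCSP (TAct A) => SCSP.par (Bn A) pr.1 pr.2)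
            (fs_prod hfsΘt (fs_dmap (step_fs hsq))) hnnprod (t', mapS Sum.inl (x i))
          have h6 : Θt t' * Δq (x i)
              ≤ Θt t' * dmap (mapS (Sum.inl : A → TAct A)) Δq
                  (mapS (Sum.inl : A → TAct A) (x i)) := by
            exact mul_le_mul_of_nonneg_left (le_dmap_self (step_fs hsq) hnnΔq (x i))
              (hwfs.1 t')
          have hpos : 0 < Θt t' * Δq (x i) := mul_pos hposΘt hposΔq
          exact ne_of_gt (lt_of_lt_of_le (lt_of_lt_of_le hpos h6) h5)
        have hC : ∀ t' ∈ dsupp Θt, Mt t' Φ₂ ≤ dexp Δq (fun v => f (cmp t' v)) := by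
          intro t' ht'
          have hval : dexp Δq (fun v => f (cmp t' v)) = ∑ i, p i * f (cmp t' (x i)) := by
            rw [hΔq, dexp_gdec]
          by_cases ht'ω : ∃ Θ0, Step t' (some (omA : TAct A)) Θ0
          · have hf1 : ∀ i, p i ≠ 0 → f (cmp t' (x i)) = 1 := fun i hpi =>
              vmem_omega_eq (cmp_omega_iff.mpr ht'ω) (hsel _ (hmemD t' ht' i hpi))
            have hMt1 : Mt t' Φ₂ = 1 := by
              rw [← ee_eq_mt hfsΦ₂ hmΦ₂]
              exact ee_omega (hfsΦ₂.subset supp_NS) ht'ω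
            have hsum1 : ∑ i, p i * f (cmp t' (x i)) = 1 := by
              rw [← hps]
              apply Finset.sum_congr rfl
              intro i _
              by_cases hpi : p i = 0
              · simp [hpi]
              · rw [hf1 i hpi, mul_one]
            rw [hval, hMt1, hsum1]
          · have ht'ω' : ∀ Θ0, ¬ Step t' (some (omA : TAct A)) Θ0 :=
              fun Θ0 h0 => ht'ω ⟨Θ0, h0⟩
            have hD := (ee_tau_star ht'ω' hts2 (hfsΦ₂.subset supp_NS)).1
            have hE : Ee t' Θfin = ∑ i, p i * Ee t' (Ψ' i) := by
              rw [hΘeq]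
              exact ee_split hp hps (fun i _ => fsim_cfp (sizeS (x i)) _ _ le_rfl (hrel i))
            have hF : ∀ i, p i ≠ 0 → Ee t' (Ψ' i) ≤ f (cmp t' (x i)) := fun i hpi =>
              ih _ (hmemD t' ht' i hpi) t' (x i) (Ψ' i) rfl (hwfs.2 t' ht') (hrel i)
            rw [← ee_eq_mt hfsΦ₂ hmΦ₂, hval]
            calc Ee t' Φ₂ ≤ Ee t' Θfin := hD
              _ = ∑ i, p i * Ee t' (Ψ' i) := hE
              _ ≤ ∑ i, p i * f (cmp t' (x i)) := by
                  apply Finset.sum_le_sum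
                  intro i _
                  by_cases hpi : p i = 0
                  · simp [hpi]
                  · exact mul_le_mul_of_nonneg_left (hF i hpi) (hp i)
        rw [dexp_dmap (fs_prod hfsΘt (fs_dmap (step_fs hsq))),
          dexp_prod hfsΘt (fs_dmap (step_fs hsq))]
        have hrw : (fun t' => dexp (dmap (mapS Sum.inl) Δq)
              (fun v => f (SCSP.par (Bn A) t' v)))
            = fun t' => dexp Δq (fun v => f (cmp t' v)) := by
          funext t'
          rw [dexp_dmap (step_fs hsq)]
          rfl
        rw [hrw]
        calc Ee t Φ ≤ Ee t Φ₁ := hA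
          _ ≤ dexp Θt (fun t' => Mt t' Φ₂) := hB
          _ ≤ dexp Θt (fun t' => dexp Δq (fun v => f (cmp t' v))) :=
              dexp_mono hfsΘt (fun t' _ => hwfs.1 t') hC

end Key

/-! ### Interpretation of the test application -/

section TopAssembly
variable {C : Type}

lemma dmap_pair_dirac_left {X Y Z : Type} (g : X × Y → Z) (s : X) {Δ : Wt Y} (hΔ : FS Δ) :
    dmap g (fun pr : X × Y => dirac s pr.1 * Δ pr.2) = dmap (fun v => g (s, v)) Δ := by
  classical
  funext u
  have hsub : dsupp (fun pr : X × Y => dirac s pr.1 * Δ pr.2)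
      ⊆ ↑(({s} : Finset X) ×ˢ hΔ.toFinset) := by
    rintro ⟨x, y⟩ hq
    rw [mem_dsupp] at hq
    simp only [Finset.coe_product, Set.mem_prod, Finset.coe_singleton,
      Set.mem_singleton_iff, Set.Finite.coe_toFinset]
    constructor
    · by_contra h0
      exact hq (by simp [dirac, h0])
    · intro h0
      exact hq (by simp [h0])
  rw [dmap_eq_sum hsub, dmap_eq_sum (show dsupp Δ ⊆ ↑hΔ.toFinset by simp),
    Finset.sum_filter, Finset.sum_filter, Finset.sum_product]
  simp only [Finset.sum_singleton]
  apply Finset.sum_congr rfl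
  intro v _
  simp [dirac]

theorem interp_parCS (B : Set C) (s : SCSP C) :
    ∀ Q : PCSP C, (parCS B s Q).interp = dmap (fun v => SCSP.par B s v) Q.interp
  | .st v => by
      show dirac (SCSP.par B s v) = dmap (fun v => SCSP.par B s v) (dirac v)
      rw [dmap_dirac]
  | .pch p Q₁ Q₂ => by
      have h1 := interp_parCS B s Q₁
      have h2 := interp_parCS B s Q₂
      show (fun u => p * (parCS B s Q₁).interp u + (1 - p) * (parCS B s Q₂).interp u) = _
      rw [h1, h2]
      exact (dmap_add2 _ p (1 - p) (interp_fs Q₁) (interp_fs Q₂)).symm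

theorem interp_parC (B : Set C) :
    ∀ T Q : PCSP C, (parC B T Q).interp
      = dmap (fun pr : SCSP C × SCSP C => SCSP.par B pr.1 pr.2)
          (fun pr => T.interp pr.1 * Q.interp pr.2)
  | .st s, Q => by
      show (parCS B s Q).interp = _
      rw [interp_parCS B s Q,
        show (fun pr : SCSP C × SCSP C => (PCSP.st s).interp pr.1 * Q.interp pr.2)
          = fun pr => dirac s pr.1 * Q.interp pr.2 from rfl,
        dmap_pair_dirac_left _ s (interp_fs Q)]
  | .pch p T₁ T₂, Q => by
      have h1 := interp_parC B T₁ Q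
      have h2 := interp_parC B T₂ Q
      show (fun u => p * (parC B T₁ Q).interp u + (1 - p) * (parC B T₂ Q).interp u) = _
      rw [h1, h2]
      have hpt : (fun pr : SCSP C × SCSP C =>
            (PCSP.pch p T₁ T₂).interp pr.1 * Q.interp pr.2)
          = fun pr => p * (fun pr : SCSP C × SCSP C => T₁.interp pr.1 * Q.interp pr.2) pr
              + (1 - p) * (fun pr : SCSP C × SCSP C => T₂.interp pr.1 * Q.interp pr.2) pr := by
        funext pr
        show (p * T₁.interp pr.1 + (1 - p) * T₂.interp pr.1) * Q.interp pr.2 = _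
        ring
      rw [hpt, dmap_add2 _ p (1 - p) (fs_prod (interp_fs T₁) (interp_fs Q))
        (fs_prod (interp_fs T₂) (interp_fs Q))]

theorem interp_applyTest {A : Type} (T : PCSP (TAct A)) (P : PCSP A) :
    (applyTest T P).interp
      = dmap (fun pr : SCSP (TAct A) × SCSP (TAct A) => SCSP.par (Bn A) pr.1 pr.2)
          (fun pr => T.interp pr.1 * dmap (mapS Sum.inl) P.interp pr.2) := by
  show (parC (Set.range Sum.inl) T (mapP Sum.inl P)).interp = _
  rw [interp_parC, interp_map]
  rfl

/-- `dexp` over a test application. -/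
lemma dexp_applyTest {A : Type} (T : PCSP (TAct A)) (P : PCSP A)
    (f : SCSP (TAct A) → ℝ) :
    dexp (applyTest T P).interp f
      = dexp T.interp (fun t => dexp P.interp (fun q => f (cmp t q))) := by
  rw [interp_applyTest,
    dexp_dmap (fs_prod (interp_fs T) (fs_dmap (interp_fs P))),
    dexp_prod (interp_fs T) (fs_dmap (interp_fs P))]
  apply dexp_congr
  intro t _
  rw [dexp_dmap (interp_fs P)]
  rfl

end TopAssembly

/-- Theorem 4.8: the failure simulation preorder is sound for must testing. -/
theorem fsim_sound_for_must (A : Type) [Fintype A] (P Q : PCSP A)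
    (hP : PWF P) (hQ : PWF Q) : FSimPre P Q → PMust P Q := by
  intro hFS T hT
  intro y hy
  obtain ⟨g, hgmem, hgval⟩ := hy
  obtain ⟨Θ₀, hPtau, hlift⟩ := hFS
  obtain ⟨n, p, xq, Φ, hp, hps, hQeq, hrel, hΘeq⟩ := hlift
  have hTfs := interp_fs T
  have hTwf := interp_wf hT
  have hPfs := interp_fs P
  have hQfs := interp_fs Q
  have hQwf := interp_wf hQ
  refine ⟨dexp (applyTest T P).interp (mv omA),
    ⟨mv omA, fun u _ => mv_mem omA u, rfl⟩, ?_⟩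
  rw [hgval, dexp_applyTest, dexp_applyTest]
  have hnnQ : ∀ v, 0 ≤ Q.interp v := hQwf.1
  have hmemTQ : ∀ t, T.interp t ≠ 0 → ∀ i, p i ≠ 0 →
      cmp t (xq i) ∈ dsupp (applyTest T Q).interp := by
    intro t ht i hpi
    rw [interp_applyTest, mem_dsupp]
    have hposT : 0 < T.interp t := lt_of_le_of_ne (hTwf.1 t) (Ne.symm ht)
    have hposQ : 0 < Q.interp (xq i) := by rw [hQeq]; exact gdec_pos hp hpi
    have hnnprod : ∀ pr : SCSP (TAct A) × SCSP (TAct A),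
        0 ≤ T.interp pr.1 * dmap (mapS Sum.inl) Q.interp pr.2 :=
      fun pr => mul_nonneg (hTwf.1 pr.1) (dmap_nonneg hnnQ pr.2)
    have h5 := le_dmap_self
      (g := fun pr : SCSP (TAct A) × SCSP (TAct A) => SCSP.par (Bn A) pr.1 pr.2)
      (fs_prod hTfs (fs_dmap hQfs)) hnnprod (t, mapS Sum.inl (xq i))
    have h6 : T.interp t * Q.interp (xq i)
        ≤ T.interp t * dmap (mapS (Sum.inl : A → TAct A)) Q.interp
            (mapS (Sum.inl : A → TAct A) (xq i)) := by
      exact mul_le_mul_of_nonneg_left (le_dmap_self hQfs hnnQ (xq i)) (hTwf.1 t)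
    exact ne_of_gt (lt_of_lt_of_le (lt_of_lt_of_le (mul_pos hposT hposQ) h6) h5)
  apply dexp_mono hTfs (fun t _ => hTwf.1 t)
  intro t ht
  have hSWFt : SWF t := hTwf.2 t ht
  have hRHSval : dexp Q.interp (fun q => g (cmp t q)) = ∑ i, p i * g (cmp t (xq i)) := by
    rw [hQeq, dexp_gdec]
  rw [hRHSval]
  by_cases hω : ∃ Θ0, Step t (some (omA : TAct A)) Θ0
  · have h1 : dexp P.interp (fun q => mv omA (cmp t q)) = 1 := by
      rw [show dexp P.interp (fun q => mv omA (cmp t q)) = Ee t P.interp from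
        (ee_eq_mt hPfs (interp_mass P)).symm]
      exact ee_omega (hPfs.subset supp_NS) hω
    have h2 : ∑ i, p i * g (cmp t (xq i)) = 1 := by
      rw [← hps]
      apply Finset.sum_congr rfl
      intro i _
      by_cases hpi : p i = 0
      · simp [hpi]
      · rw [vmem_omega_eq (cmp_omega_iff.mpr hω)
          (hgmem _ (hmemTQ t (mem_dsupp.mp ht) i hpi)), mul_one]
    rw [h1, h2]
  · have hωt : ∀ Θ0, ¬ Step t (some (omA : TAct A)) Θ0 := fun Θ0 h0 => hω ⟨Θ0, h0⟩
    calc dexp P.interp (fun q => mv omA (cmp t q))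
        = Ee t P.interp := (ee_eq_mt hPfs (interp_mass P)).symm
      _ ≤ Ee t Θ₀ := (ee_tau_star hωt hPtau (hPfs.subset supp_NS)).1
      _ = ∑ i, p i * Ee t (Φ i) := by
          rw [hΘeq]
          exact ee_split hp hps (fun i _ => fsim_cfp (sizeS (xq i)) _ _ le_rfl (hrel i))
      _ ≤ ∑ i, p i * g (cmp t (xq i)) := by
          apply Finset.sum_le_sum
          intro i _
          by_cases hpi : p i = 0
          · simp [hpi]
          · exact mul_le_mul_of_nonneg_left
              (key_bound (hgmem _ (hmemTQ t (mem_dsupp.mp ht) i hpi)) t (xq i) (Φ i)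
                rfl hSWFt (hrel i)) (hp i)

end PaperPCSP
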